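/- Let ι_X : A → X be a map in a pointed setting. Then secat(ι_X) ≤ n if and only if there exists a map ρ : X → T_n(ι_X) with t_n ∘ ρ ≃ Δ_{n+1}; and relcat(ι_X) ≤ n if and only if there exists such a ρ additionally satisfying ρ ∘ ι_X ≃ τ_n, where τ_n : A → T_n is the canonical map. -/

import Mathlib

open unitInterval

universe u

noncomputable section

/-- A continuous map is a homotopy equivalence. -/
def IsHEquiv {X Y : Type u} [TopologicalSpace X] [TopologicalSpace Y] (f : C(X, Y)) : Prop :=
  ∃ g : C(Y, X), (f.comp g).Homotopic (ContinuousMap.id Y) ∧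
    (g.comp f).Homotopic (ContinuousMap.id X)

section HPO

variable {Z A B P : Type u} [TopologicalSpace Z] [TopologicalSpace A] [TopologicalSpace B]
  [TopologicalSpace P]

/-- Gluing relation of the double mapping cylinder. -/
inductive HPORel (f : C(Z, A)) (g : C(Z, B)) :
    (A ⊕ ((Z × I) ⊕ B)) → (A ⊕ ((Z × I) ⊕ B)) → Prop
  | left (z : Z) : HPORel f g (Sum.inl (f z)) (Sum.inr (Sum.inl (z, 0)))
  | right (z : Z) : HPORel f g (Sum.inr (Sum.inl (z, 1))) (Sum.inr (Sum.inr (g z)))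

/-- The double mapping cylinder (standard homotopy pushout) of `f : Z → A` and `g : Z → B`. -/
def HPO (f : C(Z, A)) (g : C(Z, B)) : Type u := Quot (HPORel f g)

instance (f : C(Z, A)) (g : C(Z, B)) : TopologicalSpace (HPO f g) :=
  inferInstanceAs (TopologicalSpace (Quot _))

/-- Left structural map of the homotopy pushout. -/
def HPO.inl (f : C(Z, A)) (g : C(Z, B)) : C(A, HPO f g) :=
  ⟨fun a => Quot.mk _ (Sum.inl a), continuous_quot_mk.comp continuous_inl⟩

/-- Right structural map of the homotopy pushout. -/
def HPO.inr (f : C(Z, A)) (g : C(Z, B)) : C(B, HPO f g) :=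
  ⟨fun b => Quot.mk _ (Sum.inr (Sum.inr b)),
    continuous_quot_mk.comp (continuous_inr.comp continuous_inr)⟩

/-- Cylinder part of the homotopy pushout. -/
def HPO.cyl (f : C(Z, A)) (g : C(Z, B)) : C(Z × I, HPO f g) :=
  ⟨fun zt => Quot.mk _ (Sum.inr (Sum.inl zt)),
    continuous_quot_mk.comp (continuous_inr.comp continuous_inl)⟩

/-- The whisker map induced on the double mapping cylinder by a homotopy commutative square. -/
def HPO.desc (f : C(Z, A)) (g : C(Z, B)) (h : C(A, P)) (k : C(B, P))
    (H : ContinuousMap.Homotopy (h.comp f) (k.comp g)) : C(HPO f g, P) :=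
  ⟨Quot.lift (Sum.elim h (Sum.elim (fun zt => H (zt.2, zt.1)) k))
    (by
      rintro x y (⟨z⟩ | ⟨z⟩)
      · simp only [Sum.elim_inl, Sum.elim_inr]; exact (H.apply_zero z).symm
      · simp only [Sum.elim_inl, Sum.elim_inr]; exact H.apply_one z),
    continuous_quot_lift _ (by
      apply Continuous.sumElim h.continuous
      apply Continuous.sumElim _ k.continuous
      exact H.continuous.comp continuous_swap)⟩

/-- The square with legs `f, g` and cone maps `h, k` is a homotopy pushout. -/
def IsHPO (f : C(Z, A)) (g : C(Z, B)) (h : C(A, P)) (k : C(B, P)) : Prop :=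
  ∃ H : ContinuousMap.Homotopy (h.comp f) (k.comp g), IsHEquiv (HPO.desc f g h k H)

end HPO

section HPB

variable {A B X P : Type u} [TopologicalSpace A] [TopologicalSpace B] [TopologicalSpace X]
  [TopologicalSpace P]

/-- The standard homotopy pullback of `f : A → X` and `g : B → X`. -/
def HPB (f : C(A, X)) (g : C(B, X)) : Type u :=
  { p : A × C(I, X) × B // p.2.1 0 = f p.1 ∧ p.2.1 1 = g p.2.2 }

instance (f : C(A, X)) (g : C(B, X)) : TopologicalSpace (HPB f g) :=
  inferInstanceAs (TopologicalSpace (Subtype _))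

/-- First projection of the homotopy pullback. -/
def HPB.fst (f : C(A, X)) (g : C(B, X)) : C(HPB f g, A) :=
  ⟨fun p => p.1.1, continuous_fst.comp continuous_subtype_val⟩

/-- Second projection of the homotopy pullback. -/
def HPB.snd (f : C(A, X)) (g : C(B, X)) : C(HPB f g, B) :=
  ⟨fun p => p.1.2.2, continuous_snd.comp (continuous_snd.comp continuous_subtype_val)⟩

/-- The tautological homotopy over the homotopy pullback. -/
def HPB.pathHomotopy (f : C(A, X)) (g : C(B, X)) :
    ContinuousMap.Homotopy (g.comp (HPB.snd f g)) (f.comp (HPB.fst f g)) where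
  toFun := fun q => q.2.1.2.1 (σ q.1)
  continuous_toFun := by
    have h1 : Continuous fun q : I × HPB f g => (q.2.1.2.1, σ q.1) := by
      refine Continuous.prodMk ?_ (continuous_symm.comp continuous_fst)
      exact (continuous_fst.comp (continuous_snd.comp continuous_subtype_val)).comp continuous_snd
    exact ContinuousEval.continuous_eval.comp h1
  map_zero_left := fun p => by simp [HPB.snd, p.2.2]
  map_one_left := fun p => by simp [HPB.fst, p.2.1]

/-- The comparison (whisker) map into the homotopy pullback. -/
def HPB.lift (f : C(A, X)) (g : C(B, X)) (p : C(P, A)) (q : C(P, B))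
    (H : ContinuousMap.Homotopy (f.comp p) (g.comp q)) : C(P, HPB f g) :=
  ⟨fun y => ⟨(p y, ((H.toContinuousMap.comp ⟨Prod.swap, continuous_swap⟩).curry y, q y)),
      by simp⟩,
    by
      apply Continuous.subtype_mk
      exact p.continuous.prodMk
        (((H.toContinuousMap.comp ⟨Prod.swap, continuous_swap⟩).curry).continuous.prodMk
          q.continuous)⟩

/-- The square with cospan `f, g` and cone maps `p, q` is a homotopy pullback. -/
def IsHPB (f : C(A, X)) (g : C(B, X)) (p : C(P, A)) (q : C(P, B)) : Prop :=
  ∃ H : ContinuousMap.Homotopy (f.comp p) (g.comp q), IsHEquiv (HPB.lift f g p q H)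

end HPB

/-- One step of the Ganea construction: a space over `X` under `A`. -/
structure GaneaStep (A X : Type u) [TopologicalSpace A] [TopologicalSpace X] where
  G : Type u
  inst : TopologicalSpace G
  g : @ContinuousMap G X inst _
  α : @ContinuousMap A G _ inst

attribute [instance] GaneaStep.inst

/-- The Ganea construction of a map `ι : A → X`. -/
def ganea {A X : Type u} [TopologicalSpace A] [TopologicalSpace X] (ι : C(A, X)) :
    ℕ → GaneaStep A X
  | 0 => { G := A, inst := inferInstance, g := ι, α := ContinuousMap.id A }
  | n + 1 =>
    let s := ganea ι n
    { G := HPO (HPB.snd s.g ι) (HPB.fst s.g ι)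
      inst := inferInstance
      g := HPO.desc (HPB.snd s.g ι) (HPB.fst s.g ι) ι s.g (HPB.pathHomotopy s.g ι)
      α := HPO.inl (HPB.snd s.g ι) (HPB.fst s.g ι) }

/-- Least natural number (as `ℕ∞`) satisfying a predicate. -/
def theNat (P : ℕ → Prop) : ℕ∞ := sInf ((Nat.cast : ℕ → ℕ∞) '' { n | P n })

/-- `secat ι ≤ n` : the `n`-th Ganea map admits a homotopy section. -/
def secatLe {A X : Type u} [TopologicalSpace A] [TopologicalSpace X] (ι : C(A, X)) (n : ℕ) :
    Prop :=
  ∃ s : C(X, (ganea ι n).G), ((ganea ι n).g.comp s).Homotopic (ContinuousMap.id X)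

/-- `relcat ι ≤ n` : the `n`-th Ganea map admits a homotopy section compatible with `α_n`. -/
def relcatLe {A X : Type u} [TopologicalSpace A] [TopologicalSpace X] (ι : C(A, X)) (n : ℕ) :
    Prop :=
  ∃ s : C(X, (ganea ι n).G), ((ganea ι n).g.comp s).Homotopic (ContinuousMap.id X) ∧
    (s.comp ι).Homotopic (ganea ι n).α

/-- Sectional category (James), Ganea style. -/
def secat {A X : Type u} [TopologicalSpace A] [TopologicalSpace X] (ι : C(A, X)) : ℕ∞ :=
  theNat (secatLe ι)

/-- Relative category of a map. -/
def relcat {A X : Type u} [TopologicalSpace A] [TopologicalSpace X] (ι : C(A, X)) : ℕ∞ :=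
  theNat (relcatLe ι)

/-- `PushcatLe A X tX ι n` : `ι` is obtained from a homotopy equivalence by at most `n`
successive homotopy pushouts along maps to `A`. -/
inductive PushcatLe (A : Type u) [tA : TopologicalSpace A] :
    ∀ (X : Type u) (tX : TopologicalSpace X), @ContinuousMap A X tA tX → ℕ → Prop
  | equiv {X : Type u} [tX : TopologicalSpace X] (ι : C(A, X)) :
      IsHEquiv ι → PushcatLe A X tX ι 0
  | step {X X' Z : Type u} [tX : TopologicalSpace X] [tX' : TopologicalSpace X']
      [tZ : TopologicalSpace Z] {ι : C(A, X)} {n : ℕ} (h : PushcatLe A X tX ι n)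
      (ρ : C(Z, A)) (τ : C(Z, X)) (ι' : C(A, X')) (χ : C(X, X'))
      (hpo : IsHPO ρ τ ι' χ) (hχ : (χ.comp ι).Homotopic ι') :
      PushcatLe A X' tX' ι' (n + 1)
  | homotopic {X : Type u} [tX : TopologicalSpace X] {ι ι' : C(A, X)} {n : ℕ}
      (h : PushcatLe A X tX ι n) (hh : ι.Homotopic ι') : PushcatLe A X tX ι' n

/-- `RelcatLe` : as `PushcatLe`, with a compatible section at each step. -/
inductive RelcatLe (A : Type u) [tA : TopologicalSpace A] :
    ∀ (X : Type u) (tX : TopologicalSpace X), @ContinuousMap A X tA tX → ℕ → Prop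
  | equiv {X : Type u} [tX : TopologicalSpace X] (ι : C(A, X)) :
      IsHEquiv ι → RelcatLe A X tX ι 0
  | step {X X' Z : Type u} [tX : TopologicalSpace X] [tX' : TopologicalSpace X']
      [tZ : TopologicalSpace Z] {ι : C(A, X)} {n : ℕ} (h : RelcatLe A X tX ι n)
      (ρ : C(Z, A)) (τ : C(Z, X)) (ι' : C(A, X')) (χ : C(X, X'))
      (hpo : IsHPO ρ τ ι' χ) (hχ : (χ.comp ι).Homotopic ι')
      (σ₀ : C(A, Z)) (hσ : (ρ.comp σ₀).Homotopic (ContinuousMap.id A))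
      (hτσ : (τ.comp σ₀).Homotopic ι) :
      RelcatLe A X' tX' ι' (n + 1)
  | homotopic {X : Type u} [tX : TopologicalSpace X] {ι ι' : C(A, X)} {n : ℕ}
      (h : RelcatLe A X tX ι n) (hh : ι.Homotopic ι') : RelcatLe A X tX ι' n

/-- Strong pushout category of a map. -/
def Pushcat {A X : Type u} [tA : TopologicalSpace A] [tX : TopologicalSpace X]
    (ι : C(A, X)) : ℕ∞ :=
  theNat (fun n => PushcatLe A X tX ι n)

/-- Strong relative category of a map. -/
def Relcat {A X : Type u} [tA : TopologicalSpace A] [tX : TopologicalSpace X]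
    (ι : C(A, X)) : ℕ∞ :=
  theNat (fun n => RelcatLe A X tX ι n)

/-- Lusternik–Schnirelmann category (Ganea-normalized) of a pointed space. -/
def catP (X : Type u) [TopologicalSpace X] (x₀ : X) : ℕ∞ :=
  secat (ContinuousMap.const PUnit.{u + 1} x₀)

/-- Strong (Fox) category of a pointed space. -/
def CatP (X : Type u) [TopologicalSpace X] (x₀ : X) : ℕ∞ :=
  Relcat (ContinuousMap.const PUnit.{u + 1} x₀)

/-- `g : A → X` is the homotopy cofibre of `f : Y → A` (with cone point `x₀`). -/
def IsHCofiberPt {Y A X : Type u} [TopologicalSpace Y] [TopologicalSpace A] [TopologicalSpace X]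
    (f : C(Y, A)) (g : C(A, X)) (x₀ : X) : Prop :=
  IsHPO f (ContinuousMap.const Y (PUnit.unit : PUnit.{u + 1})) g
    (ContinuousMap.const PUnit.{u + 1} x₀)

/-- The diagonal map. -/
def diagMap (X : Type u) [TopologicalSpace X] : C(X, X × X) :=
  ⟨fun x => (x, x), continuous_id.prodMk continuous_id⟩

/-- Topological complexity (Farber, normalized). -/
def compl (X : Type u) [TopologicalSpace X] : ℕ∞ := secat (diagMap X)

/-- Strong complexity: strong relative category of the diagonal. -/
def Compl' (X : Type u) [TopologicalSpace X] : ℕ∞ := Relcat (diagMap X)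

end

noncomputable section

lemma continuous_snocFun {X Y : Type u} [TopologicalSpace X] [TopologicalSpace Y] {n : ℕ}
    {f : Y → Fin n → X} {g : Y → X} (hf : Continuous f) (hg : Continuous g) :
    Continuous fun y => (Fin.snoc (f y) (g y) : Fin (n + 1) → X) := by
  apply continuous_pi
  intro j
  induction j using Fin.lastCases with
  | last => simpa only [Fin.snoc_last] using hg
  | cast j => simp only [Fin.snoc_castSucc]; exact (continuous_apply j).comp hf

/-- One stage of the Whitehead (fat wedge) construction of a map `ι : A → X`. -/
structure WhStep (A X : Type u) [TopologicalSpace A] [TopologicalSpace X] (i : ℕ) where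
  T : Type u
  inst : TopologicalSpace T
  t : @ContinuousMap T (Fin (i + 1) → X) inst _
  υ : @ContinuousMap ((Fin i → X) × A) T _ inst

attribute [instance] WhStep.inst

/-- The Whitehead construction (fat wedges) of a map `ι : A → X`. -/
def whitehead {A X : Type u} [TopologicalSpace A] [TopologicalSpace X] (ιX : C(A, X)) :
    (i : ℕ) → WhStep A X i
  | 0 =>
    { T := A
      inst := inferInstance
      t := ⟨fun a _ => ιX a, continuous_pi fun _ => map_continuous ιX⟩
      υ := ⟨Prod.snd, continuous_snd⟩ }
  | i + 1 =>
    let s := whitehead ιX i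
    let utop : C(s.T × A, (Fin (i + 1) → X) × A) :=
      ⟨fun p => (s.t p.1, p.2), ((map_continuous s.t).comp continuous_fst).prodMk
        continuous_snd⟩
    let uleft : C(s.T × A, s.T × X) :=
      ⟨fun p => (p.1, ιX p.2), continuous_fst.prodMk ((map_continuous ιX).comp continuous_snd)⟩
    let h : C((Fin (i + 1) → X) × A, Fin (i + 2) → X) :=
      ⟨fun p => Fin.snoc p.1 (ιX p.2),
        continuous_snocFun continuous_fst ((map_continuous ιX).comp continuous_snd)⟩
    let k : C(s.T × X, Fin (i + 2) → X) :=
      ⟨fun p => Fin.snoc (s.t p.1) p.2,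
        continuous_snocFun ((map_continuous s.t).comp continuous_fst) continuous_snd⟩
    { T := HPO utop uleft
      inst := inferInstance
      t := HPO.desc utop uleft h k
        ((ContinuousMap.Homotopy.refl (h.comp utop)).cast rfl (by ext p; rfl))
      υ := HPO.inl utop uleft }

/-- The `n`-fold diagonal `X → Xⁿ`. -/
def diagPi (X : Type u) [TopologicalSpace X] (n : ℕ) : C(X, Fin n → X) :=
  ⟨fun x _ => x, continuous_pi fun _ => continuous_id⟩

/-- The whisker map `δ_n : A → Xⁿ × A` of `Δ_n ∘ ι` and `id`. -/
def deltaW {A X : Type u} [TopologicalSpace A] [TopologicalSpace X] (ιX : C(A, X)) (n : ℕ) :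
    C(A, (Fin n → X) × A) :=
  ⟨fun a => (fun _ => ιX a, a),
    (continuous_pi fun _ => map_continuous ιX).prodMk continuous_id⟩

end

noncomputable section AuxInfra

open ContinuousMap

theorem HPB.continuous_val {A B X : Type u} [TopologicalSpace A] [TopologicalSpace B]
    [TopologicalSpace X] (f : C(A, X)) (g : C(B, X)) :
    Continuous (fun p : HPB f g => p.1) := continuous_subtype_val

theorem theNat_le_iff (P : ℕ → Prop) (n : ℕ) : theNat P ≤ (n:ℕ∞) ↔ ∃ m ≤ n, P m := by
  constructor
  · intro h
    by_contra hc
    push_neg at hc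
    have h1 : ∀ x ∈ (Nat.cast : ℕ → ℕ∞) '' { n | P n }, (n:ℕ∞) + 1 ≤ x := by
      rintro x ⟨m, hm, rfl⟩
      have : n < m := by
        by_contra hnm
        exact hc m (by omega) hm
      exact_mod_cast this
    have h2 := le_trans (le_sInf h1) h
    rw [show ((n:ℕ∞)+1) = ((n+1:ℕ):ℕ∞) by push_cast; ring] at h2
    exact absurd (by exact_mod_cast h2 : n+1 ≤ n) (by omega)
  · rintro ⟨m, hm, hP⟩
    exact le_trans (sInf_le ⟨m, hP, rfl⟩) (by exact_mod_cast hm)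

section HPOaux

variable {Z A B W : Type u} [TopologicalSpace Z] [TopologicalSpace A] [TopologicalSpace B]
  [TopologicalSpace W]

/-- The cylinder coordinate of a double mapping cylinder. -/
def HPO.pi (f : C(Z, A)) (g : C(Z, B)) : C(HPO f g, I) :=
  ⟨Quot.lift (Sum.elim (fun _ => (0:I)) (Sum.elim (fun zt => zt.2) (fun _ => (1:I))))
    (by rintro x y (⟨z⟩ | ⟨z⟩) <;> rfl),
   continuous_quot_lift _ (by
     refine Continuous.sumElim continuous_const (Continuous.sumElim continuous_snd continuous_const))⟩

@[simp] theorem HPO.pi_inl (f : C(Z, A)) (g : C(Z, B)) (a : A) :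
    HPO.pi f g (HPO.inl f g a) = 0 := rfl

@[simp] theorem HPO.pi_cyl (f : C(Z, A)) (g : C(Z, B)) (zt : Z × I) :
    HPO.pi f g (HPO.cyl f g zt) = zt.2 := rfl

@[simp] theorem HPO.pi_inr (f : C(Z, A)) (g : C(Z, B)) (b : B) :
    HPO.pi f g (HPO.inr f g b) = 1 := rfl

@[simp] theorem HPO.desc_inl (f : C(Z, A)) (g : C(Z, B)) (h : C(A, W)) (k : C(B, W))
    (H : ContinuousMap.Homotopy (h.comp f) (k.comp g)) (a : A) :
    HPO.desc f g h k H (HPO.inl f g a) = h a := rfl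

@[simp] theorem HPO.desc_inr (f : C(Z, A)) (g : C(Z, B)) (h : C(A, W)) (k : C(B, W))
    (H : ContinuousMap.Homotopy (h.comp f) (k.comp g)) (b : B) :
    HPO.desc f g h k H (HPO.inr f g b) = k b := rfl

@[simp] theorem HPO.desc_cyl (f : C(Z, A)) (g : C(Z, B)) (h : C(A, W)) (k : C(B, W))
    (H : ContinuousMap.Homotopy (h.comp f) (k.comp g)) (zt : Z × I) :
    HPO.desc f g h k H (HPO.cyl f g zt) = H (zt.2, zt.1) := rfl

theorem HPO.inl_eq_cyl (f : C(Z, A)) (g : C(Z, B)) (z : Z) :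
    HPO.inl f g (f z) = HPO.cyl f g (z, 0) := Quot.sound (HPORel.left z)

theorem HPO.cyl_eq_inr (f : C(Z, A)) (g : C(Z, B)) (z : Z) :
    HPO.cyl f g (z, 1) = HPO.inr f g (g z) := Quot.sound (HPORel.right z)

variable (f : C(Z, A)) (g : C(Z, B))

/-- Partial value function for the "right" partial projection. -/
def HPO.preValR (s : C(B, W)) : (A ⊕ ((Z × I) ⊕ B)) → Option W :=
  Sum.elim (fun _ => none) (Sum.elim (fun zt => some (s (g zt.1))) (fun b => some (s b)))

theorem HPO.preValR_eqvGen (s : C(B, W)) :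
    ∀ u v, Relation.EqvGen (HPORel f g) u v → HPO.pi f g (Quot.mk _ u) ≠ 0 →
      HPO.preValR g s u = HPO.preValR g s v := by
  intro u v h
  induction h with
  | rel x y hr =>
    intro hx
    cases hr with
    | left z => exact absurd rfl hx
    | right z => rfl
  | refl x => intro _; rfl
  | symm x y hxy ih =>
    intro hy
    have hq : Quot.mk (HPORel f g) x = Quot.mk (HPORel f g) y := Quot.eqvGen_sound hxy
    have hx : HPO.pi f g (Quot.mk _ x) ≠ 0 := by
      first
      | exact hy
      | (rw [hq]; exact hy)
    exact (ih hx).symm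
  | trans x y z hxy hyz ih1 ih2 =>
    intro hx
    have hq : Quot.mk _ x = Quot.mk _ y := Quot.eqvGen_sound hxy
    exact (ih1 hx).trans (ih2 (by rw [← hq]; exact hx))

theorem HPO.preValR_isSome (s : C(B, W)) (u : A ⊕ ((Z × I) ⊕ B))
    (h : HPO.pi f g (Quot.mk _ u) ≠ 0) : (HPO.preValR g s u).isSome := by
  rcases u with a | ⟨zt | b⟩
  · exact absurd rfl h
  · simp [HPO.preValR]
  · simp [HPO.preValR]

/-- Bare function for the right partial projection. -/
def HPO.partialRightFun (s : C(B, W)) (x : {x : HPO f g // HPO.pi f g x ≠ 0}) : W :=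
  (HPO.preValR g s (Quot.out x.1)).get
    (HPO.preValR_isSome f g s _ (by have e : Quot.mk (HPORel f g) (Quot.out x.1) = x.1 := Quot.out_eq (x.1 : Quot (HPORel f g)); rw [e]; exact x.2))

theorem HPO.partialRightFun_spec (s : C(B, W)) (u : A ⊕ ((Z × I) ⊕ B))
    (h : HPO.pi f g (Quot.mk _ u) ≠ 0) (w : W) (hw : HPO.preValR g s u = some w) :
    HPO.partialRightFun f g s ⟨Quot.mk _ u, h⟩ = w := by
  have he : Relation.EqvGen (HPORel f g) (Quot.out (Quot.mk (HPORel f g) u)) u := by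
    apply Quot.eq.mp
    rw [Quot.out_eq]
  have hc := HPO.preValR_eqvGen f g s _ _ he (by rw [Quot.out_eq]; exact h)
  have h2 : HPO.preValR g s (Quot.out (Quot.mk _ u)) = some w := hc.trans hw
  simp only [HPO.partialRightFun]
  exact Option.get_of_mem _ (by rw [h2]; rfl)

theorem HPO.partialRightFun_continuous (s : C(B, W)) :
    Continuous (HPO.partialRightFun f g s) := by
  rw [continuous_def]
  intro O hO
  set Upre : Set (A ⊕ ((Z × I) ⊕ B)) :=
    {u | HPO.preValR g s u ∈ some '' O ∧ HPO.pi f g (Quot.mk _ u) ≠ 0} with hUpre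
  have hUpre_open : IsOpen Upre := by
    rw [isOpen_sum_iff]
    constructor
    · convert isOpen_empty
      ext a
      simp [hUpre, HPO.preValR]
    · rw [isOpen_sum_iff]
      constructor
      · have : (Sum.inl ⁻¹' (Sum.inr ⁻¹' Upre) : Set (Z × I)) =
            {zt | s (g zt.1) ∈ O} ∩ {zt | zt.2 ≠ 0} := by
          ext zt
          simp only [hUpre, Set.mem_preimage, Set.mem_setOf_eq, Set.mem_inter_iff, HPO.preValR,
            Sum.elim_inr, Sum.elim_inl]
          constructor
          · rintro ⟨⟨w, hwO, hw⟩, h2⟩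
            rw [Option.some_inj] at hw
            exact ⟨hw ▸ hwO, h2⟩
          · rintro ⟨h1, h2⟩
            exact ⟨⟨_, h1, rfl⟩, h2⟩
        rw [this]
        exact ((s.continuous.comp (g.continuous.comp continuous_fst)).isOpen_preimage O hO).inter
          ((isOpen_compl_singleton).preimage continuous_snd)
      · have : (Sum.inr ⁻¹' (Sum.inr ⁻¹' Upre) : Set B) = {b | s b ∈ O} := by
          ext b
          simp only [hUpre, Set.mem_preimage, Set.mem_setOf_eq, HPO.preValR, Sum.elim_inr]
          constructor
          · rintro ⟨⟨w, hwO, hw⟩, _⟩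
            rw [Option.some_inj] at hw
            exact hw ▸ hwO
          · intro h1
            refine ⟨⟨_, h1, rfl⟩, ?_⟩
            exact one_ne_zero
        rw [this]
        exact (s.continuous.isOpen_preimage O hO)
  have hsat : Quot.mk (HPORel f g) ⁻¹' (Quot.mk (HPORel f g) '' Upre) = Upre := by
    apply Set.Subset.antisymm
    · rintro u ⟨v, hv, hq⟩
      have he : Relation.EqvGen (HPORel f g) u v := Quot.eq.mp hq.symm
      have hpiu : HPO.pi f g (Quot.mk _ u) ≠ 0 := by
        rw [show (Quot.mk (HPORel f g) u : HPO f g) = Quot.mk _ v from hq.symm ▸ rfl]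
        · exact hv.2
      refine ⟨?_, hpiu⟩
      rw [HPO.preValR_eqvGen f g s u v he hpiu]
      exact hv.1
    · intro u hu
      exact ⟨u, hu, rfl⟩
  have himg_open : IsOpen (Quot.mk (HPORel f g) '' Upre) := by
    rw [isOpen_coinduced (f := Quot.mk (HPORel f g))] at *
    · rw [hsat]; exact hUpre_open
  have key : (HPO.partialRightFun f g s) ⁻¹' O =
      Subtype.val ⁻¹' (Quot.mk (HPORel f g) '' Upre) := by
    ext x
    obtain ⟨q, hq⟩ := x
    simp only [Set.mem_preimage]
    induction q using Quot.ind with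
    | _ u =>
      constructor
      · intro hx
        refine ⟨Quot.out (Quot.mk (HPORel f g) u), ⟨?_, ?_⟩, Quot.out_eq _⟩
        · refine ⟨_, hx, ?_⟩
          simp [HPO.partialRightFun]
        · rw [Quot.out_eq]; exact hq
      · rintro ⟨v, hv, hquv⟩
        have he : Relation.EqvGen (HPORel f g) u v := Quot.eq.mp hquv.symm
        have hc := HPO.preValR_eqvGen f g s u v he hq
        obtain ⟨w, hwO, hw⟩ := hv.1
        have : HPO.preValR g s u = some w := by rw [hc, ← hw]
        rw [HPO.partialRightFun_spec f g s u hq w this]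
        exact hwO
  rw [key]
  exact himg_open.preimage continuous_subtype_val

/-- The right partial projection on the part of the cylinder with positive coordinate. -/
def HPO.partialRight (s : C(B, W)) : C({x : HPO f g // HPO.pi f g x ≠ 0}, W) :=
  ⟨HPO.partialRightFun f g s, HPO.partialRightFun_continuous f g s⟩

@[simp] theorem HPO.partialRight_cyl (s : C(B, W)) (zt : Z × I) (h) :
    HPO.partialRight f g s ⟨HPO.cyl f g zt, h⟩ = s (g zt.1) :=
  HPO.partialRightFun_spec f g s _ h _ rfl

@[simp] theorem HPO.partialRight_inr (s : C(B, W)) (b : B) (h) :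
    HPO.partialRight f g s ⟨HPO.inr f g b, h⟩ = s b :=
  HPO.partialRightFun_spec f g s _ h _ rfl


/-- Partial value function for the "left" partial projection. -/
def HPO.preValL (h : C(A, W)) : (A ⊕ ((Z × I) ⊕ B)) → Option W :=
  Sum.elim (fun a => some (h a)) (Sum.elim (fun zt => some (h (f zt.1))) (fun _ => none))

theorem HPO.preValL_eqvGen (h : C(A, W)) :
    ∀ u v, Relation.EqvGen (HPORel f g) u v → HPO.pi f g (Quot.mk _ u) ≠ 1 →
      HPO.preValL f h u = HPO.preValL f h v := by
  intro u v hev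
  induction hev with
  | rel x y hr =>
    intro hx
    cases hr with
    | left z => rfl
    | right z => exact absurd rfl hx
  | refl x => intro _; rfl
  | symm x y hxy ih =>
    intro hy
    have hq : Quot.mk (HPORel f g) x = Quot.mk (HPORel f g) y := Quot.eqvGen_sound hxy
    have hx : HPO.pi f g (Quot.mk _ x) ≠ 1 := by
      first
      | exact hy
      | (rw [hq]; exact hy)
    exact (ih hx).symm
  | trans x y z hxy hyz ih1 ih2 =>
    intro hx
    have hq : Quot.mk (HPORel f g) x = Quot.mk (HPORel f g) y := Quot.eqvGen_sound hxy
    exact (ih1 hx).trans (ih2 (by rw [← hq]; exact hx))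

theorem HPO.preValL_isSome (h : C(A, W)) (u : A ⊕ ((Z × I) ⊕ B))
    (hu : HPO.pi f g (Quot.mk _ u) ≠ 1) : (HPO.preValL f h u).isSome := by
  rcases u with a | ⟨zt | b⟩
  · simp [HPO.preValL]
  · simp [HPO.preValL]
  · exact absurd rfl hu

/-- Bare function for the left partial projection. -/
def HPO.partialLeftFun (h : C(A, W)) (x : {x : HPO f g // HPO.pi f g x ≠ 1}) : W :=
  (HPO.preValL f h (Quot.out x.1)).get
    (HPO.preValL_isSome f g h _ (by have e : Quot.mk (HPORel f g) (Quot.out x.1) = x.1 := Quot.out_eq (x.1 : Quot (HPORel f g)); rw [e]; exact x.2))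

theorem HPO.partialLeftFun_spec (h : C(A, W)) (u : A ⊕ ((Z × I) ⊕ B))
    (hu : HPO.pi f g (Quot.mk _ u) ≠ 1) (w : W) (hw : HPO.preValL f h u = some w) :
    HPO.partialLeftFun f g h ⟨Quot.mk _ u, hu⟩ = w := by
  have he : Relation.EqvGen (HPORel f g) (Quot.out (Quot.mk (HPORel f g) u)) u := by
    apply Quot.eq.mp
    rw [Quot.out_eq]
  have hc := HPO.preValL_eqvGen f g h _ _ he (by rw [Quot.out_eq]; exact hu)
  have h2 : HPO.preValL f h (Quot.out (Quot.mk _ u)) = some w := hc.trans hw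
  simp only [HPO.partialLeftFun]
  exact Option.get_of_mem _ (by rw [h2]; rfl)

theorem HPO.partialLeftFun_continuous (h : C(A, W)) :
    Continuous (HPO.partialLeftFun f g h) := by
  rw [continuous_def]
  intro O hO
  set Upre : Set (A ⊕ ((Z × I) ⊕ B)) :=
    {u | HPO.preValL f h u ∈ some '' O ∧ HPO.pi f g (Quot.mk _ u) ≠ 1} with hUpre
  have hUpre_open : IsOpen Upre := by
    rw [isOpen_sum_iff]
    constructor
    · have : (Sum.inl ⁻¹' Upre : Set A) = {a | h a ∈ O} := by
        ext a
        simp only [hUpre, Set.mem_preimage, Set.mem_setOf_eq, HPO.preValL, Sum.elim_inl]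
        constructor
        · rintro ⟨⟨w, hwO, hw⟩, _⟩
          rw [Option.some_inj] at hw
          exact hw ▸ hwO
        · intro h1
          exact ⟨⟨_, h1, rfl⟩, zero_ne_one⟩
      rw [this]
      exact (h.continuous.isOpen_preimage O hO)
    · rw [isOpen_sum_iff]
      constructor
      · have : (Sum.inl ⁻¹' (Sum.inr ⁻¹' Upre) : Set (Z × I)) =
            {zt | h (f zt.1) ∈ O} ∩ {zt | zt.2 ≠ 1} := by
          ext zt
          simp only [hUpre, Set.mem_preimage, Set.mem_setOf_eq, Set.mem_inter_iff, HPO.preValL,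
            Sum.elim_inr, Sum.elim_inl]
          constructor
          · rintro ⟨⟨w, hwO, hw⟩, h2⟩
            rw [Option.some_inj] at hw
            exact ⟨hw ▸ hwO, h2⟩
          · rintro ⟨h1, h2⟩
            exact ⟨⟨_, h1, rfl⟩, h2⟩
        rw [this]
        exact ((h.continuous.comp (f.continuous.comp continuous_fst)).isOpen_preimage O hO).inter
          ((isOpen_compl_singleton).preimage continuous_snd)
      · convert isOpen_empty
        ext b
        simp [hUpre, HPO.preValL]
  have hsat : Quot.mk (HPORel f g) ⁻¹' (Quot.mk (HPORel f g) '' Upre) = Upre := by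
    apply Set.Subset.antisymm
    · rintro u ⟨v, hv, hq⟩
      have he : Relation.EqvGen (HPORel f g) u v := Quot.eq.mp hq.symm
      have hpiu : HPO.pi f g (Quot.mk _ u) ≠ 1 := by
        rw [show (Quot.mk (HPORel f g) u : HPO f g) = Quot.mk _ v from hq.symm ▸ rfl]
        · exact hv.2
      refine ⟨?_, hpiu⟩
      rw [HPO.preValL_eqvGen f g h u v he hpiu]
      exact hv.1
    · intro u hu
      exact ⟨u, hu, rfl⟩
  have himg_open : IsOpen (Quot.mk (HPORel f g) '' Upre) := by
    rw [isOpen_coinduced (f := Quot.mk (HPORel f g))] at *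
    · rw [hsat]; exact hUpre_open
  have key : (HPO.partialLeftFun f g h) ⁻¹' O =
      Subtype.val ⁻¹' (Quot.mk (HPORel f g) '' Upre) := by
    ext x
    obtain ⟨q, hq⟩ := x
    simp only [Set.mem_preimage]
    induction q using Quot.ind with
    | _ u =>
      constructor
      · intro hx
        refine ⟨Quot.out (Quot.mk (HPORel f g) u), ⟨?_, ?_⟩, Quot.out_eq _⟩
        · refine ⟨_, hx, ?_⟩
          simp [HPO.partialLeftFun]
        · rw [Quot.out_eq]; exact hq
      · rintro ⟨v, hv, hquv⟩
        have he : Relation.EqvGen (HPORel f g) u v := Quot.eq.mp hquv.symm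
        have hc := HPO.preValL_eqvGen f g h u v he hq
        obtain ⟨w, hwO, hw⟩ := hv.1
        have hval : HPO.preValL f h u = some w := by rw [hc, ← hw]
        rw [HPO.partialLeftFun_spec f g h u hq w hval]
        exact hwO
  rw [key]
  exact himg_open.preimage continuous_subtype_val

/-- The left partial projection on the part of the cylinder with coordinate below one. -/
def HPO.partialLeft (h : C(A, W)) : C({x : HPO f g // HPO.pi f g x ≠ 1}, W) :=
  ⟨HPO.partialLeftFun f g h, HPO.partialLeftFun_continuous f g h⟩

@[simp] theorem HPO.partialLeft_inl (h : C(A, W)) (a : A) (hu) :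
    HPO.partialLeft f g h ⟨HPO.inl f g a, hu⟩ = h a :=
  HPO.partialLeftFun_spec f g h _ hu _ rfl

@[simp] theorem HPO.partialLeft_cyl (h : C(A, W)) (zt : Z × I) (hu) :
    HPO.partialLeft f g h ⟨HPO.cyl f g zt, hu⟩ = h (f zt.1) :=
  HPO.partialLeftFun_spec f g h _ hu _ rfl

end HPOaux


section Glue

variable {Z A B P : Type u} [TopologicalSpace Z] [TopologicalSpace A] [TopologicalSpace B]
  [TopologicalSpace P]

/-- Glue a homotopy between maps out of a double mapping cylinder from pieces. -/
def HPO.glueHomotopy (f : C(Z, A)) (g : C(Z, B)) (F G : C(HPO f g, P))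
    (HA : ContinuousMap.Homotopy (F.comp (HPO.inl f g)) (G.comp (HPO.inl f g)))
    (HB : ContinuousMap.Homotopy (F.comp (HPO.inr f g)) (G.comp (HPO.inr f g)))
    (Θ : C((Z × I) × I, P))
    (hbot : ∀ zt, Θ (zt, 0) = F (HPO.cyl f g zt))
    (htop : ∀ zt, Θ (zt, 1) = G (HPO.cyl f g zt))
    (hleft : ∀ z v, Θ ((z, 0), v) = HA (v, f z))
    (hright : ∀ z v, Θ ((z, 1), v) = HB (v, g z)) :
    ContinuousMap.Homotopy F G := by
  let ΛA : C(A, C(I, P)) := (HA.toContinuousMap.comp ⟨Prod.swap, continuous_swap⟩).curry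
  let ΛB : C(B, C(I, P)) := (HB.toContinuousMap.comp ⟨Prod.swap, continuous_swap⟩).curry
  let Λ : HPO f g → C(I, P) := Quot.lift
    (Sum.elim ΛA (Sum.elim Θ.curry ΛB))
    (by
      rintro x y (⟨z⟩ | ⟨z⟩)
      · simp only [Sum.elim_inl, Sum.elim_inr]
        ext v
        exact (hleft z v).symm
      · simp only [Sum.elim_inl, Sum.elim_inr]
        ext v
        exact hright z v)
  have hΛ : Continuous Λ := continuous_quot_lift _
    (Continuous.sumElim ΛA.continuous (Continuous.sumElim Θ.curry.continuous ΛB.continuous))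
  refine ⟨⟨fun p => Λ p.2 p.1, ?_⟩, ?_, ?_⟩
  · exact ContinuousEval.continuous_eval.comp ((hΛ.comp continuous_snd).prodMk continuous_fst)
  · intro q
    induction q using Quot.ind with
    | _ u =>
      rcases u with a | ⟨zt | b⟩
      · exact HA.apply_zero a
      · exact hbot zt
      · exact HB.apply_zero b
  · intro q
    induction q using Quot.ind with
    | _ u =>
      rcases u with a | ⟨zt | b⟩
      · exact HA.apply_one a
      · exact htop zt
      · exact HB.apply_one b

end Glue

section Paste

variable {α β : Type*} [TopologicalSpace α] [TopologicalSpace β]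

theorem continuous_of_three_closed {f : α → β} {C1 C2 C3 : Set α}
    (h1 : IsClosed C1) (h2 : IsClosed C2) (h3 : IsClosed C3)
    (hcover : C1 ∪ C2 ∪ C3 = Set.univ)
    (hf1 : ContinuousOn f C1) (hf2 : ContinuousOn f C2) (hf3 : ContinuousOn f C3) :
    Continuous f := by
  rw [continuous_iff_isClosed]
  intro F hF
  have : f ⁻¹' F = (C1 ∩ f ⁻¹' F) ∪ (C2 ∩ f ⁻¹' F) ∪ (C3 ∩ f ⁻¹' F) := by
    rw [← Set.union_inter_distrib_right, ← Set.union_inter_distrib_right, hcover,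
      Set.univ_inter]
  rw [this]
  exact ((hf1.preimage_isClosed_of_isClosed h1 hF).union
    (hf2.preimage_isClosed_of_isClosed h2 hF)).union
    (hf3.preimage_isClosed_of_isClosed h3 hF)

theorem continuousOn_of_restrict {f : α → β} {s : Set α} {F : C({x // x ∈ s}, β)}
    (h : ∀ x (hx : x ∈ s), f x = F ⟨x, hx⟩) : ContinuousOn f s := by
  rw [continuousOn_iff_continuous_restrict]
  have : s.domRestrict f = fun x => F x := by
    funext x
    exact h x.1 x.2
  rw [this]
  exact F.continuous

end Paste

section EvI

variable {α Y : Type*} [TopologicalSpace α] [TopologicalSpace Y]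

/-- Clamp a real number into the unit interval. -/
def clampI (r : ℝ) : I := Set.projIcc 0 1 zero_le_one r

theorem continuous_clampI : Continuous clampI := continuous_projIcc (h := zero_le_one)

theorem clampI_coe (t : I) : clampI (t : ℝ) = t := Set.projIcc_val zero_le_one t

theorem clampI_of_nonpos {r : ℝ} (h : r ≤ 0) : clampI r = 0 := by
  rw [clampI, Set.projIcc_of_le_left _ h]; rfl

theorem clampI_of_one_le {r : ℝ} (h : 1 ≤ r) : clampI r = 1 := by
  rw [clampI, Set.projIcc_of_right_le _ h]; rfl

theorem clampI_zero : clampI 0 = 0 := clampI_of_nonpos le_rfl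

theorem clampI_one : clampI 1 = 1 := clampI_of_one_le le_rfl

theorem clampI_eq_of_mem {r : ℝ} (h0 : 0 ≤ r) (h1 : r ≤ 1) : (clampI r : ℝ) = r := by
  have : r ∈ Set.Icc (0:ℝ) 1 := ⟨h0, h1⟩
  rw [clampI, Set.projIcc_of_mem _ this]

theorem continuous_evI {w : α → C(I, Y)} {r : α → ℝ} (hw : Continuous w) (hr : Continuous r) :
    Continuous fun a => (w a) (clampI (r a)) :=
  ContinuousEval.continuous_eval.comp (hw.prodMk (continuous_clampI.comp hr))

end EvI


section Main

variable {A X : Type u} [TopologicalSpace A] [TopologicalSpace X] (ιX : C(A, X))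

/-- Top structural map in the Whitehead step. -/
def utopW (n : ℕ) : C((whitehead ιX n).T × A, (Fin (n + 1) → X) × A) :=
  ⟨fun p => ((whitehead ιX n).t p.1, p.2),
    ((map_continuous (whitehead ιX n).t).comp continuous_fst).prodMk continuous_snd⟩

/-- Left structural map in the Whitehead step. -/
def uleftW (n : ℕ) : C((whitehead ιX n).T × A, (whitehead ιX n).T × X) :=
  ⟨fun p => (p.1, ιX p.2), continuous_fst.prodMk ((map_continuous ιX).comp continuous_snd)⟩

/-- Top cone map in the Whitehead step. -/
def hWm (n : ℕ) : C((Fin (n + 1) → X) × A, Fin (n + 2) → X) :=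
  ⟨fun p => Fin.snoc p.1 (ιX p.2),
    continuous_snocFun continuous_fst ((map_continuous ιX).comp continuous_snd)⟩

/-- Bottom cone map in the Whitehead step. -/
def kWm (n : ℕ) : C((whitehead ιX n).T × X, Fin (n + 2) → X) :=
  ⟨fun p => Fin.snoc ((whitehead ιX n).t p.1) p.2,
    continuous_snocFun ((map_continuous (whitehead ιX n).t).comp continuous_fst) continuous_snd⟩

theorem whitehead_succ (n : ℕ) :
    whitehead ιX (n + 1) =
      { T := HPO (utopW ιX n) (uleftW ιX n)
        inst := inferInstance
        t := HPO.desc (utopW ιX n) (uleftW ιX n) (hWm ιX n) (kWm ιX n)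
          ((ContinuousMap.Homotopy.refl ((hWm ιX n).comp (utopW ιX n))).cast rfl
            (by ext p; rfl))
        υ := HPO.inl (utopW ιX n) (uleftW ιX n) } := rfl

theorem ganea_succ (n : ℕ) :
    ganea ιX (n + 1) =
      { G := HPO (HPB.snd (ganea ιX n).g ιX) (HPB.fst (ganea ιX n).g ιX)
        inst := inferInstance
        g := HPO.desc (HPB.snd (ganea ιX n).g ιX) (HPB.fst (ganea ιX n).g ιX) ιX (ganea ιX n).g
          (HPB.pathHomotopy (ganea ιX n).g ιX)
        α := HPO.inl (HPB.snd (ganea ιX n).g ιX) (HPB.fst (ganea ιX n).g ιX) } := rfl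

theorem diagPi_snoc (x : X) (n : ℕ) :
    (Fin.snoc (diagPi X (n + 1) x) x : Fin (n + 2) → X) = diagPi X (n + 2) x := by
  funext i
  induction i using Fin.lastCases with
  | last => simp [Fin.snoc_last, diagPi]
  | cast j => simp [Fin.snoc_castSucc, diagPi]

end Main


section Forward

variable {A X : Type u} [TopologicalSpace A] [TopologicalSpace X] (ιX : C(A, X)) (n : ℕ)
  (φ : C((ganea ιX n).G, (whitehead ιX n).T))
  (H : ContinuousMap.Homotopy ((whitehead ιX n).t.comp φ)
    ((diagPi X (n + 1)).comp (ganea ιX n).g))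

theorem coeI_zero : (((0:I)):ℝ) = 0 := rfl
theorem coeI_one : (((1:I)):ℝ) = 1 := rfl

/-- A-side cone map of the comparison at the next stage. -/
def fwdh : C(A, HPO (utopW ιX n) (uleftW ιX n)) :=
  (HPO.inl (utopW ιX n) (uleftW ιX n)).comp
    ⟨fun a => (diagPi X (n + 1) (ιX a), a),
      (((diagPi X (n + 1)).continuous).comp (map_continuous ιX)).prodMk continuous_id⟩

/-- G-side cone map of the comparison at the next stage. -/
def fwdk : C((ganea ιX n).G, HPO (utopW ιX n) (uleftW ιX n)) :=
  (HPO.inr (utopW ιX n) (uleftW ιX n)).comp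
    ⟨fun e => (φ e, (ganea ιX n).g e),
      (map_continuous φ).prodMk (map_continuous (ganea ιX n).g)⟩

/-- The connecting homotopy over the cylinder of the Ganea step. -/
def fwdC : ContinuousMap.Homotopy
    ((fwdh ιX n).comp (HPB.snd (ganea ιX n).g ιX))
    ((fwdk ιX n φ).comp (HPB.fst (ganea ιX n).g ιX)) where
  toFun := fun q =>
    if ((q.1:ℝ)) ≤ 1/4 then
      HPO.inl (utopW ιX n) (uleftW ιX n)
        (diagPi X (n + 1) (q.2.1.2.1 (clampI (1 - 4*(q.1:ℝ)))), q.2.1.2.2)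
    else if ((q.1:ℝ)) ≤ 5/8 then
      HPO.inl (utopW ιX n) (uleftW ιX n)
        (H (clampI ((5 - 8*(q.1:ℝ))/3), q.2.1.1), q.2.1.2.2)
    else if ((q.1:ℝ)) ≤ 3/4 then
      HPO.cyl (utopW ιX n) (uleftW ιX n) ((φ q.2.1.1, q.2.1.2.2), clampI (8*(q.1:ℝ) - 5))
    else
      HPO.inr (utopW ιX n) (uleftW ιX n) (φ q.2.1.1, q.2.1.2.1 (clampI (4 - 4*(q.1:ℝ))))
  continuous_toFun := by
    have ct : Continuous fun q : I × HPB (ganea ιX n).g ιX => (q.1 : ℝ) :=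
      continuous_subtype_val.comp continuous_fst
    have cval : Continuous fun q : I × HPB (ganea ιX n).g ιX => q.2.1 :=
      continuous_subtype_val.comp continuous_snd
    have ce : Continuous fun q : I × HPB (ganea ιX n).g ιX => q.2.1.1 :=
      continuous_fst.comp cval
    have cγ : Continuous fun q : I × HPB (ganea ιX n).g ιX => q.2.1.2.1 :=
      continuous_fst.comp (continuous_snd.comp cval)
    have ca : Continuous fun q : I × HPB (ganea ιX n).g ιX => q.2.1.2.2 :=
      continuous_snd.comp (continuous_snd.comp cval)
    apply Continuous.if_le
    · exact (map_continuous (HPO.inl (utopW ιX n) (uleftW ιX n))).comp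
        ((((diagPi X (n+1)).continuous).comp
          (continuous_evI cγ (continuous_const.sub (continuous_const.mul ct)))).prodMk ca)
    · apply Continuous.if_le
      · exact (map_continuous (HPO.inl (utopW ιX n) (uleftW ιX n))).comp
          ((H.continuous.comp ((continuous_clampI.comp
            ((continuous_const.sub (continuous_const.mul ct)).div_const 3)).prodMk ce)).prodMk ca)
      · apply Continuous.if_le
        · exact (map_continuous (HPO.cyl (utopW ιX n) (uleftW ιX n))).comp
            ((((map_continuous φ).comp ce).prodMk ca).prodMk
              (continuous_clampI.comp ((continuous_const.mul ct).sub continuous_const)))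
        · exact (map_continuous (HPO.inr (utopW ιX n) (uleftW ιX n))).comp
            (((map_continuous φ).comp ce).prodMk
              (continuous_evI cγ (continuous_const.sub (continuous_const.mul ct))))
        · exact ct
        · exact continuous_const
        · intro q hq
          rw [hq]
          rw [show clampI (8*(3/4:ℝ) - 5) = 1 by rw [show (8*(3/4:ℝ)-5) = 1 by norm_num]; exact clampI_one]
          rw [show clampI (4 - 4*(3/4:ℝ)) = 1 by rw [show (4 - 4*(3/4:ℝ)) = 1 by norm_num]; exact clampI_one]
          rw [HPO.cyl_eq_inr]
          rw [q.2.2.2]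
          rfl
      · exact ct
      · exact continuous_const
      · intro q hq
        rw [hq, if_pos (by norm_num : (5/8:ℝ) ≤ 3/4)]
        rw [show clampI ((5 - 8*(5/8:ℝ))/3) = 0 by rw [show ((5-8*(5/8:ℝ))/3) = 0 by norm_num]; exact clampI_zero]
        rw [show clampI (8*(5/8:ℝ) - 5) = 0 by rw [show (8*(5/8:ℝ)-5) = 0 by norm_num]; exact clampI_zero]
        rw [show H (0, q.2.1.1) = (whitehead ιX n).t (φ q.2.1.1) from H.apply_zero q.2.1.1]
        exact HPO.inl_eq_cyl (utopW ιX n) (uleftW ιX n) (φ q.2.1.1, q.2.1.2.2)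
    · exact ct
    · exact continuous_const
    · intro q hq
      rw [hq, if_pos (by norm_num : (1/4:ℝ) ≤ 5/8)]
      rw [show clampI (1 - 4*(1/4:ℝ)) = 0 by rw [show (1 - 4*(1/4:ℝ)) = 0 by norm_num]; exact clampI_zero]
      rw [show clampI ((5 - 8*(1/4:ℝ))/3) = 1 by rw [show ((5-8*(1/4:ℝ))/3) = 1 by norm_num]; exact clampI_one]
      rw [q.2.2.1]
      rw [show H (1, q.2.1.1) = diagPi X (n+1) ((ganea ιX n).g q.2.1.1) from H.apply_one q.2.1.1]
  map_zero_left := by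
    intro z
    simp only [ContinuousMap.coe_mk]
    rw [if_pos (by rw [coeI_zero]; norm_num : (((0:I)):ℝ) ≤ 1/4)]
    rw [show clampI (1 - 4*(((0:I)):ℝ)) = 1 by rw [coeI_zero, show (1 - 4*(0:ℝ)) = 1 by norm_num]; exact clampI_one]
    rw [z.2.2]
    rfl
  map_one_left := by
    intro z
    simp only [ContinuousMap.coe_mk]
    rw [if_neg (by rw [coeI_one]; norm_num : ¬ (((1:I)):ℝ) ≤ 1/4)]
    rw [if_neg (by rw [coeI_one]; norm_num : ¬ (((1:I)):ℝ) ≤ 5/8)]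
    rw [if_neg (by rw [coeI_one]; norm_num : ¬ (((1:I)):ℝ) ≤ 3/4)]
    rw [show clampI (4 - 4*(((1:I)):ℝ)) = 0 by rw [coeI_one, show (4 - 4*(1:ℝ)) = 0 by norm_num]; exact clampI_zero]
    rw [z.2.1]
    rfl

/-- The comparison map at the next stage. -/
def fwdPhi : C((ganea ιX (n + 1)).G, (whitehead ιX (n + 1)).T) :=
  HPO.desc (HPB.snd (ganea ιX n).g ιX) (HPB.fst (ganea ιX n).g ιX)
    (fwdh ιX n) (fwdk ιX n φ) (fwdC ιX n φ H)

end Forward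


section Forward2

variable {A X : Type u} [TopologicalSpace A] [TopologicalSpace X] (ιX : C(A, X)) (n : ℕ)
  (φ : C((ganea ιX n).G, (whitehead ιX n).T))
  (H : ContinuousMap.Homotopy ((whitehead ιX n).t.comp φ)
    ((diagPi X (n + 1)).comp (ganea ιX n).g))

theorem fwdC_apply (t : I) (z : HPB (ganea ιX n).g ιX) :
    fwdC ιX n φ H (t, z) =
      (if ((t:ℝ)) ≤ 1/4 then
        HPO.inl (utopW ιX n) (uleftW ιX n)
          (diagPi X (n + 1) (z.1.2.1 (clampI (1 - 4*(t:ℝ)))), z.1.2.2)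
      else if ((t:ℝ)) ≤ 5/8 then
        HPO.inl (utopW ιX n) (uleftW ιX n)
          (H (clampI ((5 - 8*(t:ℝ))/3), z.1.1), z.1.2.2)
      else if ((t:ℝ)) ≤ 3/4 then
        HPO.cyl (utopW ιX n) (uleftW ιX n) ((φ z.1.1, z.1.2.2), clampI (8*(t:ℝ) - 5))
      else
        HPO.inr (utopW ιX n) (uleftW ιX n) (φ z.1.1, z.1.2.1 (clampI (4 - 4*(t:ℝ))))) := rfl

theorem fwdPhi_cyl (zt : (HPB (ganea ιX n).g ιX) × I) :
    fwdPhi ιX n φ H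
      (HPO.cyl (HPB.snd (ganea ιX n).g ιX) (HPB.fst (ganea ιX n).g ιX) zt) =
      fwdC ιX n φ H (zt.2, zt.1) := rfl

theorem tsucc_inl (p : (Fin (n + 1) → X) × A) :
    (whitehead ιX (n + 1)).t (HPO.inl (utopW ιX n) (uleftW ιX n) p) =
      Fin.snoc p.1 (ιX p.2) := rfl

theorem tsucc_inr (p : (whitehead ιX n).T × X) :
    (whitehead ιX (n + 1)).t (HPO.inr (utopW ιX n) (uleftW ιX n) p) =
      Fin.snoc ((whitehead ιX n).t p.1) p.2 := rfl

theorem tsucc_cyl (zs : ((whitehead ιX n).T × A) × I) :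
    (whitehead ιX (n + 1)).t (HPO.cyl (utopW ιX n) (uleftW ιX n) zs) =
      Fin.snoc ((whitehead ιX n).t zs.1.1) (ιX zs.1.2) := rfl

theorem gsucc_cyl (zt : (HPB (ganea ιX n).g ιX) × I) :
    (ganea ιX (n + 1)).g
      (HPO.cyl (HPB.snd (ganea ιX n).g ιX) (HPB.fst (ganea ιX n).g ιX) zt) =
      zt.1.1.2.1 (σ zt.2) := rfl


theorem fwdPhi_inl (a : A) :
    fwdPhi ιX n φ H
      (HPO.inl (HPB.snd (ganea ιX n).g ιX) (HPB.fst (ganea ιX n).g ιX) a) =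
      HPO.inl (utopW ιX n) (uleftW ιX n) (diagPi X (n + 1) (ιX a), a) := rfl

theorem fwdPhi_inr (e : (ganea ιX n).G) :
    fwdPhi ιX n φ H
      (HPO.inr (HPB.snd (ganea ιX n).g ιX) (HPB.fst (ganea ιX n).g ιX) e) =
      HPO.inr (utopW ιX n) (uleftW ιX n) (φ e, (ganea ιX n).g e) := rfl

theorem gsucc_inl (a : A) :
    (ganea ιX (n + 1)).g
      (HPO.inl (HPB.snd (ganea ιX n).g ιX) (HPB.fst (ganea ιX n).g ιX) a) = ιX a := rfl

theorem gsucc_inr (e : (ganea ιX n).G) :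
    (ganea ιX (n + 1)).g
      (HPO.inr (HPB.snd (ganea ιX n).g ιX) (HPB.fst (ganea ιX n).g ιX) e) =
      (ganea ιX n).g e := rfl

/-- The two-parameter homotopy over the cylinder for the comparison of homotopies. -/
def fwdTheta : C(((HPB (ganea ιX n).g ιX) × I) × I, Fin (n + 2) → X) where
  toFun := fun q =>
    Fin.snoc
      (if ((q.1.2:ℝ)) ≤ (1 + 3*(q.2:ℝ))/4 then
        diagPi X (n + 1) (q.1.1.1.2.1 (clampI (1 - 4*(q.1.2:ℝ)/(1 + 3*(q.2:ℝ)))))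
      else H (clampI (1 - (8/3)*((q.1.2:ℝ) - (1 + 3*(q.2:ℝ))/4)), q.1.1.1.1))
      (q.1.1.1.2.1 (clampI ((1 - (q.2:ℝ))*(min 1 (4*(1 - (q.1.2:ℝ)))) + (q.2:ℝ)*(1 - (q.1.2:ℝ)))))
  continuous_toFun := by
    have ct : Continuous fun q : ((HPB (ganea ιX n).g ιX) × I) × I => (q.1.2 : ℝ) :=
      continuous_subtype_val.comp (continuous_snd.comp continuous_fst)
    have cv : Continuous fun q : ((HPB (ganea ιX n).g ιX) × I) × I => (q.2 : ℝ) :=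
      continuous_subtype_val.comp continuous_snd
    have cval : Continuous fun q : ((HPB (ganea ιX n).g ιX) × I) × I => q.1.1.1 :=
      continuous_subtype_val.comp (continuous_fst.comp continuous_fst)
    have ce : Continuous fun q : ((HPB (ganea ιX n).g ιX) × I) × I => q.1.1.1.1 :=
      continuous_fst.comp cval
    have cγ : Continuous fun q : ((HPB (ganea ιX n).g ιX) × I) × I => q.1.1.1.2.1 :=
      continuous_fst.comp (continuous_snd.comp cval)
    have cden : Continuous fun q : ((HPB (ganea ιX n).g ιX) × I) × I => (1 + 3*(q.2:ℝ)) :=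
      continuous_const.add (continuous_const.mul cv)
    have hden : ∀ q : ((HPB (ganea ιX n).g ιX) × I) × I, (1 + 3*(q.2:ℝ)) ≠ 0 := by
      intro q
      have := q.2.2.1
      positivity
    apply continuous_snocFun
    · apply Continuous.if_le
      · exact ((diagPi X (n+1)).continuous).comp (continuous_evI cγ
          (continuous_const.sub (Continuous.div (continuous_const.mul ct) cden hden)))
      · exact H.continuous.comp ((continuous_clampI.comp
          (continuous_const.sub (continuous_const.mul (ct.sub (cden.div_const 4))))).prodMk ce)
      · exact ct
      · exact cden.div_const 4
      · intro q hq
        have h1 : (1 - 4*(q.1.2:ℝ)/(1 + 3*(q.2:ℝ))) = 0 := by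
          rw [hq]
          rw [show (4*((1 + 3*(q.2:ℝ))/4)) = (1 + 3*(q.2:ℝ)) by ring]
          rw [div_self (hden q)]
          ring
        have h2 : (1 - (8/3)*((q.1.2:ℝ) - (1 + 3*(q.2:ℝ))/4)) = 1 := by
          rw [hq]; ring
        rw [h1, h2, clampI_zero, clampI_one]
        rw [show q.1.1.1.2.1 0 = (ganea ιX n).g q.1.1.1.1 from q.1.1.2.1]
        exact (H.apply_one q.1.1.1.1).symm
    · exact continuous_evI cγ
        (((continuous_const.sub cv).mul (continuous_const.min
          (continuous_const.mul (continuous_const.sub ct)))).add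
          (cv.mul (continuous_const.sub ct)))

theorem fwdTheta_apply (z : HPB (ganea ιX n).g ιX) (t v : I) :
    fwdTheta ιX n φ H ((z, t), v) =
      Fin.snoc
        (if ((t:ℝ)) ≤ (1 + 3*(v:ℝ))/4 then
          diagPi X (n + 1) (z.1.2.1 (clampI (1 - 4*(t:ℝ)/(1 + 3*(v:ℝ)))))
        else H (clampI (1 - (8/3)*((t:ℝ) - (1 + 3*(v:ℝ))/4)), z.1.1))
        (z.1.2.1 (clampI ((1 - (v:ℝ))*(min 1 (4*(1 - (t:ℝ)))) + (v:ℝ)*(1 - (t:ℝ))))) := rfl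

end Forward2


section Forward3

variable {A X : Type u} [TopologicalSpace A] [TopologicalSpace X] (ιX : C(A, X)) (n : ℕ)
  (φ : C((ganea ιX n).G, (whitehead ιX n).T))
  (H : ContinuousMap.Homotopy ((whitehead ιX n).t.comp φ)
    ((diagPi X (n + 1)).comp (ganea ιX n).g))

theorem snoc_congr {α : Type*} {k : ℕ} {a c : Fin k → α} {b d : α} (h1 : a = c) (h2 : b = d) :
    (Fin.snoc a b : Fin (k+1) → α) = Fin.snoc c d := by rw [h1, h2]

/-- The A-side homotopy for the gluing. -/
def fwdHA : ContinuousMap.Homotopy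
    (((whitehead ιX (n + 1)).t.comp (fwdPhi ιX n φ H)).comp
      (HPO.inl (HPB.snd (ganea ιX n).g ιX) (HPB.fst (ganea ιX n).g ιX)))
    (((diagPi X (n + 2)).comp (ganea ιX (n + 1)).g).comp
      (HPO.inl (HPB.snd (ganea ιX n).g ιX) (HPB.fst (ganea ιX n).g ιX))) :=
  (ContinuousMap.Homotopy.refl _).cast rfl (by
    ext a i
    exact congrFun (diagPi_snoc (ιX a) n) i)

/-- The G-side homotopy for the gluing. -/
def fwdHB : ContinuousMap.Homotopy
    (((whitehead ιX (n + 1)).t.comp (fwdPhi ιX n φ H)).comp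
      (HPO.inr (HPB.snd (ganea ιX n).g ιX) (HPB.fst (ganea ιX n).g ιX)))
    (((diagPi X (n + 2)).comp (ganea ιX (n + 1)).g).comp
      (HPO.inr (HPB.snd (ganea ιX n).g ιX) (HPB.fst (ganea ιX n).g ιX))) where
  toFun := fun p => Fin.snoc (H (clampI (2*(p.1:ℝ) - 1), p.2)) ((ganea ιX n).g p.2)
  continuous_toFun := by
    apply continuous_snocFun
    · exact H.continuous.comp ((continuous_clampI.comp
        ((continuous_const.mul (continuous_subtype_val.comp continuous_fst)).sub
          continuous_const)).prodMk continuous_snd)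
    · exact (map_continuous (ganea ιX n).g).comp continuous_snd
  map_zero_left := fun e => by
    simp only [ContinuousMap.coe_mk]
    rw [show clampI (2*(((0:I)):ℝ) - 1) = 0 by
      rw [coeI_zero]; exact clampI_of_nonpos (by norm_num)]
    rw [show H (0, e) = ((whitehead ιX n).t.comp φ) e from H.apply_zero e]
    rfl
  map_one_left := fun e => by
    simp only [ContinuousMap.coe_mk]
    rw [show clampI (2*(((1:I)):ℝ) - 1) = 1 by
      rw [coeI_one]; exact clampI_of_one_le (by norm_num)]
    rw [show H (1, e) = diagPi X (n + 1) ((ganea ιX n).g e) from H.apply_one e]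
    exact diagPi_snoc _ n


theorem fwdHA_apply (v : I) (a : A) :
    fwdHA ιX n φ H (v, a) = Fin.snoc (diagPi X (n + 1) (ιX a)) (ιX a) := by
  rw [show fwdHA ιX n φ H (v, a) =
    (((whitehead ιX (n + 1)).t.comp (fwdPhi ιX n φ H)).comp
      (HPO.inl (HPB.snd (ganea ιX n).g ιX) (HPB.fst (ganea ιX n).g ιX))) a from rfl]
  rfl

theorem fwdHB_apply (v : I) (e : (ganea ιX n).G) :
    fwdHB ιX n φ H (v, e) =
      Fin.snoc (H (clampI (2*(v:ℝ) - 1), e)) ((ganea ιX n).g e) := rfl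

theorem fwd_hbot (zt : (HPB (ganea ιX n).g ιX) × I) :
    fwdTheta ιX n φ H (zt, 0) =
      ((whitehead ιX (n + 1)).t.comp (fwdPhi ιX n φ H))
        (HPO.cyl (HPB.snd (ganea ιX n).g ιX) (HPB.fst (ganea ιX n).g ιX) zt) := by
  obtain ⟨z, t⟩ := zt
  have hγ1 : z.1.2.1 1 = ιX z.1.2.2 := z.2.2
  have ht0 : (0:ℝ) ≤ (t:ℝ) := t.2.1
  have ht1 : (t:ℝ) ≤ 1 := t.2.2
  show fwdTheta ιX n φ H ((z, t), 0) = (whitehead ιX (n + 1)).t (fwdC ιX n φ H (t, z))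
  rw [fwdC_apply, fwdTheta_apply]
  simp only [coeI_zero]
  rw [show ((1:ℝ) + 3*0)/4 = 1/4 by norm_num]
  rw [show (1 - 4*(t:ℝ)/(1 + 3*(0:ℝ))) = 1 - 4*(t:ℝ) by norm_num]
  rw [show ((1 - (0:ℝ))*(min 1 (4*(1 - (t:ℝ)))) + (0:ℝ)*(1 - (t:ℝ))) =
    min 1 (4*(1 - (t:ℝ))) by ring]
  by_cases h1 : (t:ℝ) ≤ 1/4
  · rw [if_pos h1, if_pos h1, tsucc_inl]
    refine snoc_congr rfl ?_
    rw [min_eq_left (by linarith), clampI_one, hγ1]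
  · rw [if_neg h1, if_neg h1]
    by_cases h2 : (t:ℝ) ≤ 5/8
    · rw [if_pos h2, tsucc_inl]
      refine snoc_congr ?_ ?_
      · rw [show (1 - (8/3)*((t:ℝ) - 1/4)) = (5 - 8*(t:ℝ))/3 by ring]
      · rw [min_eq_left (by linarith), clampI_one, hγ1]
    · rw [if_neg h2]
      by_cases h3 : (t:ℝ) ≤ 3/4
      · rw [if_pos h3, tsucc_cyl]
        refine snoc_congr ?_ ?_
        · rw [clampI_of_nonpos (by linarith)]
          rw [show H (0, z.1.1) = ((whitehead ιX n).t.comp φ) z.1.1 from H.apply_zero z.1.1]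
          rfl
        · rw [min_eq_left (by linarith), clampI_one, hγ1]
      · rw [if_neg h3, tsucc_inr]
        refine snoc_congr ?_ ?_
        · rw [clampI_of_nonpos (by linarith)]
          rw [show H (0, z.1.1) = ((whitehead ιX n).t.comp φ) z.1.1 from H.apply_zero z.1.1]
          rfl
        · rw [min_eq_right (by linarith), show (4*(1 - (t:ℝ))) = 4 - 4*(t:ℝ) by ring]

theorem fwd_htop (zt : (HPB (ganea ιX n).g ιX) × I) :
    fwdTheta ιX n φ H (zt, 1) =
      ((diagPi X (n + 2)).comp (ganea ιX (n + 1)).g)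
        (HPO.cyl (HPB.snd (ganea ιX n).g ιX) (HPB.fst (ganea ιX n).g ιX) zt) := by
  obtain ⟨z, t⟩ := zt
  have ht1 : (t:ℝ) ≤ 1 := t.2.2
  show fwdTheta ιX n φ H ((z, t), 1) = diagPi X (n + 2) (z.1.2.1 (σ t))
  rw [fwdTheta_apply]
  simp only [coeI_one]
  rw [show ((1:ℝ) + 3*1)/4 = 1 by norm_num]
  rw [if_pos ht1]
  rw [show (1 - 4*(t:ℝ)/(1 + 3*(1:ℝ))) = 1 - (t:ℝ) by norm_num]
  rw [show ((1 - (1:ℝ))*(min 1 (4*(1 - (t:ℝ)))) + (1:ℝ)*(1 - (t:ℝ))) = 1 - (t:ℝ) by ring]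
  have hσ : clampI (1 - (t:ℝ)) = σ t := by
    rw [show (1 - (t:ℝ)) = ((σ t : I):ℝ) from (unitInterval.coe_symm_eq t).symm, clampI_coe]
  rw [hσ]
  exact diagPi_snoc _ n

theorem fwd_hleft (z : HPB (ganea ιX n).g ιX) (v : I) :
    fwdTheta ιX n φ H ((z, 0), v) =
      fwdHA ιX n φ H (v, HPB.snd (ganea ιX n).g ιX z) := by
  have hγ1 : z.1.2.1 1 = ιX z.1.2.2 := z.2.2
  have hv0 : (0:ℝ) ≤ (v:ℝ) := v.2.1
  rw [fwdTheta_apply]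
  simp only [coeI_zero]
  rw [if_pos (by positivity : (0:ℝ) ≤ (1 + 3*(v:ℝ))/4)]
  rw [show (1 - 4*(0:ℝ)/(1 + 3*(v:ℝ))) = 1 by norm_num]
  rw [show ((1 - (v:ℝ))*(min 1 (4*(1 - (0:ℝ)))) + (v:ℝ)*(1 - (0:ℝ))) = 1 by
    rw [show min (1:ℝ) (4*(1-(0:ℝ))) = 1 by norm_num]; ring]
  rw [clampI_one, hγ1]
  rw [show (HPB.snd (ganea ιX n).g ιX) z = z.1.2.2 from rfl, fwdHA_apply]

theorem fwd_hright (z : HPB (ganea ιX n).g ιX) (v : I) :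
    fwdTheta ιX n φ H ((z, 1), v) =
      fwdHB ιX n φ H (v, HPB.fst (ganea ιX n).g ιX z) := by
  have hγ0 : z.1.2.1 0 = (ganea ιX n).g z.1.1 := z.2.1
  have hv0 : (0:ℝ) ≤ (v:ℝ) := v.2.1
  have hv1 : (v:ℝ) ≤ 1 := v.2.2
  rw [fwdTheta_apply]
  simp only [coeI_one]
  rw [show (HPB.fst (ganea ιX n).g ιX) z = z.1.1 from rfl, fwdHB_apply]
  rw [show ((1 - (v:ℝ))*(min 1 (4*(1 - (1:ℝ)))) + (v:ℝ)*(1 - (1:ℝ))) = 0 by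
    rw [show (4*(1-(1:ℝ))) = 0 by norm_num, show min (1:ℝ) 0 = 0 by norm_num]; ring]
  rw [clampI_zero, hγ0]
  by_cases hv : (1:ℝ) ≤ (1 + 3*(v:ℝ))/4
  · have hveq : (v:ℝ) = 1 := by linarith
    rw [if_pos hv]
    rw [show (1 - 4*(1:ℝ)/(1 + 3*(v:ℝ))) = 0 by rw [hveq]; norm_num]
    rw [clampI_zero, hγ0]
    rw [show clampI (2*(v:ℝ) - 1) = 1 by rw [hveq]; exact clampI_of_one_le (by norm_num)]
    rw [show H (1, z.1.1) = diagPi X (n + 1) ((ganea ιX n).g z.1.1) from H.apply_one z.1.1]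
  · rw [if_neg hv]
    refine snoc_congr ?_ rfl
    rw [show (1 - (8/3)*((1:ℝ) - (1 + 3*(v:ℝ))/4)) = 2*(v:ℝ) - 1 by ring]

/-- The comparison homotopy at the next stage. -/
def fwdH : ContinuousMap.Homotopy
    ((whitehead ιX (n + 1)).t.comp (fwdPhi ιX n φ H))
    ((diagPi X (n + 2)).comp (ganea ιX (n + 1)).g) :=
  HPO.glueHomotopy (HPB.snd (ganea ιX n).g ιX) (HPB.fst (ganea ιX n).g ιX)
    ((whitehead ιX (n + 1)).t.comp (fwdPhi ιX n φ H))
    ((diagPi X (n + 2)).comp (ganea ιX (n + 1)).g)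
    (fwdHA ιX n φ H) (fwdHB ιX n φ H) (fwdTheta ιX n φ H)
    (fwd_hbot ιX n φ H) (fwd_htop ιX n φ H) (fwd_hleft ιX n φ H) (fwd_hright ιX n φ H)

/-- Forward comparison: a map from the Ganea space to the fat wedge over the diagonal. -/
theorem forwardAux :
    ∀ m : ℕ, ∃ (φ' : C((ganea ιX m).G, (whitehead ιX m).T))
      (_ : ContinuousMap.Homotopy ((whitehead ιX m).t.comp φ')
        ((diagPi X (m + 1)).comp (ganea ιX m).g)),
      φ'.comp (ganea ιX m).α = (whitehead ιX m).υ.comp (deltaW ιX m) := by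
  intro m
  induction m with
  | zero =>
    refine ⟨ContinuousMap.id A, (ContinuousMap.Homotopy.refl _).cast rfl (by ext a i; rfl), ?_⟩
    ext a
    rfl
  | succ k ih =>
    obtain ⟨φ', Hh, _⟩ := ih
    exact ⟨fwdPhi ιX k φ' Hh, fwdH ιX k φ' Hh, by ext a; rfl⟩

end Forward3


section Reverse1

variable {A X : Type u} [TopologicalSpace A] [TopologicalSpace X] (ιX : C(A, X)) (n : ℕ)

/-- The `A`-valued partial projection of the fat wedge step. -/
def qAW : C({τ : HPO (utopW ιX n) (uleftW ιX n) //
    HPO.pi (utopW ιX n) (uleftW ιX n) τ ≠ 1}, A) :=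
  HPO.partialLeft (utopW ιX n) (uleftW ιX n) ⟨Prod.snd, continuous_snd⟩

/-- The `T_n`-valued partial projection of the fat wedge step. -/
def pTW : C({τ : HPO (utopW ιX n) (uleftW ιX n) //
    HPO.pi (utopW ιX n) (uleftW ιX n) τ ≠ 0}, (whitehead ιX n).T) :=
  HPO.partialRight (utopW ιX n) (uleftW ιX n) ⟨Prod.fst, continuous_fst⟩

theorem tsucc_init (τ : HPO (utopW ιX n) (uleftW ιX n))
    (h : HPO.pi (utopW ιX n) (uleftW ιX n) τ ≠ 0) :
    Fin.init ((whitehead ιX (n + 1)).t τ) = (whitehead ιX n).t (pTW ιX n ⟨τ, h⟩) := by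
  induction τ using Quot.ind with
  | _ u =>
    rcases u with va | ⟨zt | b⟩
    · exact absurd rfl h
    · show Fin.init ((whitehead ιX (n + 1)).t (HPO.cyl (utopW ιX n) (uleftW ιX n) zt)) =
        (whitehead ιX n).t (pTW ιX n ⟨HPO.cyl (utopW ιX n) (uleftW ιX n) zt, h⟩)
      rw [show pTW ιX n ⟨HPO.cyl (utopW ιX n) (uleftW ιX n) zt, h⟩ = zt.1.1 from
        HPO.partialRight_cyl _ _ _ zt h, tsucc_cyl]
      exact Fin.init_snoc _ _
    · show Fin.init ((whitehead ιX (n + 1)).t (HPO.inr (utopW ιX n) (uleftW ιX n) b)) =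
        (whitehead ιX n).t (pTW ιX n ⟨HPO.inr (utopW ιX n) (uleftW ιX n) b, h⟩)
      rw [show pTW ιX n ⟨HPO.inr (utopW ιX n) (uleftW ιX n) b, h⟩ = b.1 from
        HPO.partialRight_inr _ _ _ b h, tsucc_inr]
      exact Fin.init_snoc _ _

theorem tsucc_last (τ : HPO (utopW ιX n) (uleftW ιX n))
    (h : HPO.pi (utopW ιX n) (uleftW ιX n) τ ≠ 1) :
    ((whitehead ιX (n + 1)).t τ) (Fin.last (n + 1)) = ιX (qAW ιX n ⟨τ, h⟩) := by
  induction τ using Quot.ind with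
  | _ u =>
    rcases u with va | ⟨zt | b⟩
    · show ((whitehead ιX (n + 1)).t (HPO.inl (utopW ιX n) (uleftW ιX n) va)) (Fin.last (n + 1)) =
        ιX (qAW ιX n ⟨HPO.inl (utopW ιX n) (uleftW ιX n) va, h⟩)
      rw [show qAW ιX n ⟨HPO.inl (utopW ιX n) (uleftW ιX n) va, h⟩ = va.2 from
        HPO.partialLeft_inl _ _ _ va h, tsucc_inl]
      exact Fin.snoc_last _ _
    · show ((whitehead ιX (n + 1)).t (HPO.cyl (utopW ιX n) (uleftW ιX n) zt)) (Fin.last (n + 1)) =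
        ιX (qAW ιX n ⟨HPO.cyl (utopW ιX n) (uleftW ιX n) zt, h⟩)
      rw [show qAW ιX n ⟨HPO.cyl (utopW ιX n) (uleftW ιX n) zt, h⟩ = zt.1.2 from
        HPO.partialLeft_cyl _ _ _ zt h, tsucc_cyl]
      exact Fin.snoc_last _ _
    · exact absurd rfl h

theorem qAW_upsilon (a : A) (h) :
    qAW ιX n ⟨(whitehead ιX (n + 1)).υ (deltaW ιX (n + 1) a), h⟩ = a :=
  HPO.partialLeft_inl (utopW ιX n) (uleftW ιX n) ⟨Prod.snd, continuous_snd⟩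
    ((fun _ => ιX a : Fin (n+1) → X), a) h

theorem pi_upsilon (a : A) :
    HPO.pi (utopW ιX n) (uleftW ιX n) ((whitehead ιX (n + 1)).υ (deltaW ιX (n + 1) a)) = 0 := rfl

end Reverse1


section Reverse2

variable {A X : Type u} [TopologicalSpace A] [TopologicalSpace X] (ιX : C(A, X)) (n : ℕ)
  (ψ : C(HPB (diagPi X (n + 1)) (whitehead ιX n).t, (ganea ιX n).G))
  (Gh : ContinuousMap.Homotopy ((ganea ιX n).g.comp ψ)
    (HPB.fst (diagPi X (n + 1)) (whitehead ιX n).t))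

theorem ne1_of_le13 {t : I} (h : (t:ℝ) ≤ 1/3) : t ≠ 1 := by
  intro hh
  rw [hh, coeI_one] at h
  norm_num at h

theorem ne1_of_le23 {t : I} (h : (t:ℝ) ≤ 2/3) : t ≠ 1 := by
  intro hh
  rw [hh, coeI_one] at h
  norm_num at h

theorem ne0_of_not_le13 {t : I} (h : ¬ (t:ℝ) ≤ 1/3) : t ≠ 0 := by
  intro hh
  rw [hh, coeI_zero] at h
  norm_num at h

/-- Cylinder coordinate on the homotopy pullback of the fat wedge. -/
def muW : C(HPB (diagPi X (n + 2)) (whitehead ιX (n + 1)).t, I) :=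
  (HPO.pi (utopW ιX n) (uleftW ιX n)).comp
    ⟨fun p => (p.1.2.2 : HPO (utopW ιX n) (uleftW ιX n)),
      continuous_snd.comp (continuous_snd.comp continuous_subtype_val)⟩

/-- Truncation map into the lower homotopy pullback. -/
def PhiR : C({p : HPB (diagPi X (n + 2)) (whitehead ιX (n + 1)).t // muW ιX n p ≠ 0},
    HPB (diagPi X (n + 1)) (whitehead ιX n).t) where
  toFun q := ⟨(q.1.1.1,
      ((⟨Fin.init, continuous_pi fun j => continuous_apply _⟩ :
          C(Fin (n + 2) → X, Fin (n + 1) → X)).comp q.1.1.2.1,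
        pTW ιX n ⟨q.1.1.2.2, q.2⟩)), by
    constructor
    · show Fin.init (q.1.1.2.1 0) = _
      rw [show q.1.1.2.1 0 = diagPi X (n + 2) q.1.1.1 from q.1.2.1]
      rfl
    · show Fin.init (q.1.1.2.1 1) = _
      rw [show q.1.1.2.1 1 = (whitehead ιX (n + 1)).t q.1.1.2.2 from q.1.2.2]
      exact tsucc_init ιX n _ q.2⟩
  continuous_toFun := by
    apply Continuous.subtype_mk
    have cval : Continuous fun q : {p : HPB (diagPi X (n + 2)) (whitehead ιX (n + 1)).t //
        muW ιX n p ≠ 0} => q.1.1 :=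
      continuous_subtype_val.comp continuous_subtype_val
    refine (continuous_fst.comp cval).prodMk (Continuous.prodMk ?_ ?_)
    · exact (ContinuousMap.continuous_postcomp _).comp
        (continuous_fst.comp (continuous_snd.comp cval))
    · exact (map_continuous (pTW ιX n)).comp
        (Continuous.subtype_mk (continuous_snd.comp (continuous_snd.comp cval)) _)

/-- The Ganea-space component over the region with positive cylinder coordinate. -/
def eR : C({p : HPB (diagPi X (n + 2)) (whitehead ιX (n + 1)).t // muW ιX n p ≠ 0},
    (ganea ιX n).G) := ψ.comp (PhiR ιX n)

/-- The family of connecting paths. -/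
def gammaR : C({p : HPB (diagPi X (n + 2)) (whitehead ιX (n + 1)).t // muW ιX n p ≠ 0} × I, X) where
  toFun := fun q =>
    if ((q.2:ℝ)) ≤ 1/2 then Gh (clampI (2*(q.2:ℝ)), PhiR ιX n q.1)
    else (q.1.1.1.2.1 (clampI (2*(q.2:ℝ) - 1))) (Fin.last (n + 1))
  continuous_toFun := by
    have cu : Continuous fun q : {p : HPB (diagPi X (n + 2)) (whitehead ιX (n + 1)).t //
        muW ιX n p ≠ 0} × I => (q.2 : ℝ) := continuous_subtype_val.comp continuous_snd
    have cw : Continuous fun q : {p : HPB (diagPi X (n + 2)) (whitehead ιX (n + 1)).t //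
        muW ιX n p ≠ 0} × I => q.1.1.1.2.1 :=
      continuous_fst.comp (continuous_snd.comp (((HPB.continuous_val _ _).comp
        (continuous_subtype_val.comp continuous_fst))))
    apply Continuous.if_le
    · exact Gh.continuous.comp ((continuous_clampI.comp (continuous_const.mul cu)).prodMk
        ((map_continuous (PhiR ιX n)).comp continuous_fst))
    · exact (continuous_apply (Fin.last (n + 1))).comp
        (continuous_evI cw ((continuous_const.mul cu).sub continuous_const))
    · exact cu
    · exact continuous_const
    · intro q hq
      rw [hq]
      rw [show clampI (2*(1/2:ℝ)) = 1 by rw [show (2*(1/2:ℝ)) = 1 by norm_num]; exact clampI_one]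
      rw [show clampI (2*(1/2:ℝ) - 1) = 0 by
        rw [show (2*(1/2:ℝ) - 1) = 0 by norm_num]; exact clampI_zero]
      rw [show Gh (1, PhiR ιX n q.1) =
        (HPB.fst (diagPi X (n + 1)) (whitehead ιX n).t) (PhiR ιX n q.1) from Gh.apply_one _]
      rw [show q.1.1.1.2.1 0 = diagPi X (n + 2) q.1.1.1.1 from q.1.1.2.1]
      rfl

/-- Curried connecting paths. -/
def gammaC : C({p : HPB (diagPi X (n + 2)) (whitehead ιX (n + 1)).t // muW ιX n p ≠ 0}, C(I, X)) :=
  (gammaR ιX n ψ Gh).curry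

theorem gammaC_apply (q) (u : I) :
    gammaC ιX n ψ Gh q u =
      (if ((u:ℝ)) ≤ 1/2 then Gh (clampI (2*(u:ℝ)), PhiR ιX n q)
      else (q.1.1.2.1 (clampI (2*(u:ℝ) - 1))) (Fin.last (n + 1))) := rfl

/-- The cylinder datum over the middle region. -/
def zMid : C({p : HPB (diagPi X (n + 2)) (whitehead ιX (n + 1)).t //
    muW ιX n p ≠ 0 ∧ muW ιX n p ≠ 1}, HPB (ganea ιX n).g ιX) where
  toFun q := ⟨(eR ιX n ψ ⟨q.1, q.2.1⟩,
      (gammaC ιX n ψ Gh ⟨q.1, q.2.1⟩, qAW ιX n ⟨q.1.1.2.2, q.2.2⟩)), by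
    constructor
    · rw [gammaC_apply]
      rw [if_pos (by rw [coeI_zero]; norm_num : (((0:I)):ℝ) ≤ 1/2)]
      rw [show clampI (2*(((0:I)):ℝ)) = 0 by
        rw [coeI_zero, show (2*(0:ℝ)) = 0 by norm_num]; exact clampI_zero]
      rw [show Gh (0, PhiR ιX n ⟨q.1, q.2.1⟩) =
        ((ganea ιX n).g.comp ψ) (PhiR ιX n ⟨q.1, q.2.1⟩) from Gh.apply_zero _]
      rfl
    · rw [gammaC_apply]
      rw [if_neg (by rw [coeI_one]; norm_num : ¬ (((1:I)):ℝ) ≤ 1/2)]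
      rw [show clampI (2*(((1:I)):ℝ) - 1) = 1 by
        rw [coeI_one, show (2*(1:ℝ) - 1) = 1 by norm_num]; exact clampI_one]
      rw [show q.1.1.2.1 1 = (whitehead ιX (n + 1)).t q.1.1.2.2 from q.1.2.2]
      exact tsucc_last ιX n _ q.2.2⟩
  continuous_toFun := by
    apply Continuous.subtype_mk
    refine ((map_continuous (eR ιX n ψ)).comp (Continuous.subtype_mk
      continuous_subtype_val _)).prodMk (Continuous.prodMk ?_ ?_)
    · exact (map_continuous (gammaC ιX n ψ Gh)).comp
        (Continuous.subtype_mk continuous_subtype_val _)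
    · exact (map_continuous (qAW ιX n)).comp (Continuous.subtype_mk
        (continuous_snd.comp (continuous_snd.comp
          ((HPB.continuous_val _ _).comp continuous_subtype_val))) _)

end Reverse2


section Reverse3

variable {A X : Type u} [TopologicalSpace A] [TopologicalSpace X] (ιX : C(A, X)) (n : ℕ)
  (ψ : C(HPB (diagPi X (n + 1)) (whitehead ιX n).t, (ganea ιX n).G))
  (Gh : ContinuousMap.Homotopy ((ganea ιX n).g.comp ψ)
    (HPB.fst (diagPi X (n + 1)) (whitehead ιX n).t))

theorem ne0_of_ge {t : I} {c : ℝ} (hc : 0 < c) (h : c ≤ (t:ℝ)) : t ≠ 0 := by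
  intro hh
  rw [hh, coeI_zero] at h
  linarith

/-- The underlying function of the next-stage section comparison. -/
def revPsiFun (p : HPB (diagPi X (n + 2)) (whitehead ιX (n + 1)).t) : (ganea ιX (n + 1)).G :=
  if h1 : ((muW ιX n p):ℝ) ≤ 1/3 then
    HPO.inl (HPB.snd (ganea ιX n).g ιX) (HPB.fst (ganea ιX n).g ιX)
      (qAW ιX n ⟨p.1.2.2, ne1_of_le13 h1⟩)
  else if h2 : ((muW ιX n p):ℝ) ≤ 2/3 then
    HPO.cyl (HPB.snd (ganea ιX n).g ιX) (HPB.fst (ganea ιX n).g ιX)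
      (zMid ιX n ψ Gh ⟨p, ⟨ne0_of_not_le13 h1, ne1_of_le23 h2⟩⟩, clampI (3*((muW ιX n p):ℝ) - 1))
  else HPO.inr (HPB.snd (ganea ιX n).g ιX) (HPB.fst (ganea ιX n).g ιX)
    (eR ιX n ψ ⟨p, ne0_of_not_le13 h1⟩)

theorem revPsiFun_continuous : Continuous (revPsiFun ιX n ψ Gh) := by
  have cmu : Continuous fun p : HPB (diagPi X (n + 2)) (whitehead ιX (n + 1)).t =>
      ((muW ιX n p):ℝ) := continuous_subtype_val.comp (map_continuous (muW ιX n))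
  apply continuous_of_three_closed
    (isClosed_le cmu continuous_const)
    (IsClosed.inter (isClosed_le continuous_const cmu) (isClosed_le cmu continuous_const))
    (isClosed_le continuous_const cmu)
  · apply Set.eq_univ_iff_forall.mpr
    intro p
    rcases le_or_gt ((muW ιX n p):ℝ) (1/3) with h | h
    · exact Or.inl (Or.inl h)
    · rcases le_or_gt ((muW ιX n p):ℝ) (2/3) with h2 | h2
      · exact Or.inl (Or.inr ⟨le_of_lt h, h2⟩)
      · exact Or.inr (le_of_lt h2)
  · refine continuousOn_of_restrict (F := (HPO.inl (HPB.snd (ganea ιX n).g ιX)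
      (HPB.fst (ganea ιX n).g ιX)).comp ((qAW ιX n).comp
        ⟨fun q => ⟨q.1.1.2.2, ne1_of_le13 q.2⟩, Continuous.subtype_mk
          (continuous_snd.comp (continuous_snd.comp
            ((HPB.continuous_val _ _).comp continuous_subtype_val))) _⟩)) ?_
    intro x hx
    rw [revPsiFun]; erw [dif_pos (show ((muW ιX n x):ℝ) ≤ 1/3 from hx)]
    rfl
  · refine continuousOn_of_restrict (F := (HPO.cyl (HPB.snd (ganea ιX n).g ιX)
      (HPB.fst (ganea ιX n).g ιX)).comp
        ⟨fun q => (zMid ιX n ψ Gh ⟨q.1, ⟨ne0_of_ge (by norm_num) q.2.1, ne1_of_le23 q.2.2⟩⟩,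
            clampI (3*((muW ιX n q.1):ℝ) - 1)), by
          refine ((map_continuous (zMid ιX n ψ Gh)).comp (Continuous.subtype_mk
            continuous_subtype_val _)).prodMk (continuous_clampI.comp ?_)
          exact (continuous_const.mul ((continuous_subtype_val.comp
            (map_continuous (muW ιX n))).comp continuous_subtype_val)).sub continuous_const⟩) ?_
    intro x hx
    have hx1 : (1/3:ℝ) ≤ ((muW ιX n x):ℝ) := hx.1
    have hx2 : ((muW ιX n x):ℝ) ≤ 2/3 := hx.2
    by_cases h1 : ((muW ιX n x):ℝ) ≤ 1/3
    · have heq : ((muW ιX n x):ℝ) = 1/3 := le_antisymm h1 hx1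
      rw [revPsiFun]; erw [dif_pos h1]
      show _ = HPO.cyl _ _ (zMid ιX n ψ Gh ⟨x, _⟩, clampI (3*((muW ιX n x):ℝ) - 1))
      rw [show clampI (3*((muW ιX n x):ℝ) - 1) = 0 by
        rw [heq, show (3*(1/3:ℝ) - 1) = 0 by norm_num]; exact clampI_zero]
      rw [← HPO.inl_eq_cyl]
      rfl
    · rw [revPsiFun]; erw [dif_neg h1, dif_pos hx2]
      rfl
  · refine continuousOn_of_restrict (F := (HPO.inr (HPB.snd (ganea ιX n).g ιX)
      (HPB.fst (ganea ιX n).g ιX)).comp ((eR ιX n ψ).comp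
        ⟨fun q => ⟨q.1, ne0_of_ge (by norm_num) q.2⟩, Continuous.subtype_mk
          continuous_subtype_val _⟩)) ?_
    intro x hx
    have hx3 : (2/3:ℝ) ≤ ((muW ιX n x):ℝ) := hx
    by_cases h1 : ((muW ιX n x):ℝ) ≤ 1/3
    · exfalso
      linarith
    · by_cases h2 : ((muW ιX n x):ℝ) ≤ 2/3
      · have heq : ((muW ιX n x):ℝ) = 2/3 := le_antisymm h2 hx3
        rw [revPsiFun]; erw [dif_neg h1, dif_pos h2]
        show HPO.cyl _ _ (zMid ιX n ψ Gh ⟨x, _⟩, clampI (3*((muW ιX n x):ℝ) - 1)) = _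
        rw [show clampI (3*((muW ιX n x):ℝ) - 1) = 1 by
          rw [heq, show (3*(2/3:ℝ) - 1) = 1 by norm_num]; exact clampI_one]
        rw [HPO.cyl_eq_inr]
        rfl
      · rw [revPsiFun]; erw [dif_neg h1, dif_neg h2]
        rfl

/-- The next-stage comparison from the fat-wedge pullback to the Ganea space. -/
def revPsi : C(HPB (diagPi X (n + 2)) (whitehead ιX (n + 1)).t, (ganea ιX (n + 1)).G) :=
  ⟨revPsiFun ιX n ψ Gh, revPsiFun_continuous ιX n ψ Gh⟩

theorem revPsi_upsilon (p : HPB (diagPi X (n + 2)) (whitehead ιX (n + 1)).t) (a : A)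
    (hp : p.1.2.2 = (whitehead ιX (n + 1)).υ (deltaW ιX (n + 1) a)) :
    revPsi ιX n ψ Gh p = (ganea ιX (n + 1)).α a := by
  have hmu : muW ιX n p = 0 := by
    show HPO.pi (utopW ιX n) (uleftW ιX n) (p.1.2.2 : HPO (utopW ιX n) (uleftW ιX n)) = 0
    rw [hp]
    exact pi_upsilon ιX n a
  have h1 : ((muW ιX n p):ℝ) ≤ 1/3 := by rw [hmu, coeI_zero]; norm_num
  show revPsiFun ιX n ψ Gh p = _
  rw [revPsiFun]; erw [dif_pos h1]
  rw [show (⟨p.1.2.2, ne1_of_le13 h1⟩ :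
      {τ : HPO (utopW ιX n) (uleftW ιX n) // HPO.pi (utopW ιX n) (uleftW ιX n) τ ≠ 1}) =
    ⟨(whitehead ιX (n + 1)).υ (deltaW ιX (n + 1) a), by
      rw [← hp]; exact ne1_of_le13 h1⟩ from Subtype.ext hp]
  rw [qAW_upsilon]
  rfl

end Reverse3


section Reverse4

variable {A X : Type u} [TopologicalSpace A] [TopologicalSpace X] (ιX : C(A, X)) (n : ℕ)
  (ψ : C(HPB (diagPi X (n + 1)) (whitehead ιX n).t, (ganea ιX n).G))
  (Gh : ContinuousMap.Homotopy ((ganea ιX n).g.comp ψ)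
    (HPB.fst (diagPi X (n + 1)) (whitehead ιX n).t))

theorem gammaC_ge_half (q) {r : ℝ} (h0 : 1/2 ≤ r) (h1 : r ≤ 1) :
    gammaC ιX n ψ Gh q (clampI r) = (q.1.1.2.1 (clampI (2*r - 1))) (Fin.last (n + 1)) := by
  have hc : ((clampI r):ℝ) = r := clampI_eq_of_mem (by linarith) h1
  rw [gammaC_apply]
  by_cases hle : ((clampI r):ℝ) ≤ 1/2
  · have hr2 : r = 1/2 := le_antisymm (by rw [hc] at hle; exact hle) h0
    rw [if_pos hle, hc, hr2]
    rw [show clampI (2*(1/2:ℝ)) = 1 by rw [show (2*(1/2:ℝ)) = 1 by norm_num]; exact clampI_one]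
    rw [show clampI (2*(1/2:ℝ) - 1) = 0 by
      rw [show (2*(1/2:ℝ) - 1) = 0 by norm_num]; exact clampI_zero]
    rw [show Gh (1, PhiR ιX n q) =
      (HPB.fst (diagPi X (n + 1)) (whitehead ιX n).t) (PhiR ιX n q) from Gh.apply_one _]
    rw [show q.1.1.2.1 0 = diagPi X (n + 2) q.1.1.1 from q.1.2.1]
    rfl
  · rw [if_neg hle, hc]

theorem gammaC_le_half (q) {r : ℝ} (h0 : 0 ≤ r) (h1 : r ≤ 1/2) :
    gammaC ιX n ψ Gh q (clampI r) = Gh (clampI (2*r), PhiR ιX n q) := by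
  have hc : ((clampI r):ℝ) = r := clampI_eq_of_mem h0 (by linarith)
  rw [gammaC_apply, if_pos (by rw [hc]; exact h1), hc]

/-- Underlying function of the section-compatibility homotopy at the next stage. -/
def revGhFun (q : I × HPB (diagPi X (n + 2)) (whitehead ιX (n + 1)).t) : X :=
  if h1 : ((muW ιX n q.2):ℝ) ≤ 1/3 then
    (q.2.1.2.1 (clampI (1 - (q.1:ℝ)))) (Fin.last (n + 1))
  else if _h2 : ((muW ιX n q.2):ℝ) ≤ 2/3 then
    gammaC ιX n ψ Gh ⟨q.2, ne0_of_not_le13 h1⟩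
      (clampI ((1 - (q.1:ℝ))*(2 - 3*((muW ιX n q.2):ℝ)) + (q.1:ℝ)*(1/2)))
  else Gh (q.1, PhiR ιX n ⟨q.2, ne0_of_not_le13 h1⟩)

theorem revGhFun_continuous : Continuous (revGhFun ιX n ψ Gh) := by
  have cmu : Continuous fun q : I × HPB (diagPi X (n + 2)) (whitehead ιX (n + 1)).t =>
      ((muW ιX n q.2):ℝ) :=
    continuous_subtype_val.comp ((map_continuous (muW ιX n)).comp continuous_snd)
  have ctt : Continuous fun q : I × HPB (diagPi X (n + 2)) (whitehead ιX (n + 1)).t =>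
      (q.1:ℝ) := continuous_subtype_val.comp continuous_fst
  apply continuous_of_three_closed
    (isClosed_le cmu continuous_const)
    (IsClosed.inter (isClosed_le continuous_const cmu)
      (isClosed_le cmu continuous_const))
    (isClosed_le continuous_const cmu)
  · apply Set.eq_univ_iff_forall.mpr
    intro p
    rcases le_or_gt ((muW ιX n p.2):ℝ) (1/3) with h | h
    · exact Or.inl (Or.inl h)
    · rcases le_or_gt ((muW ιX n p.2):ℝ) (2/3) with h2 | h2
      · exact Or.inl (Or.inr ⟨le_of_lt h, h2⟩)
      · exact Or.inr (le_of_lt h2)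
  · refine continuousOn_of_restrict (F := ⟨fun r =>
      (r.1.2.1.2.1 (clampI (1 - (r.1.1:ℝ)))) (Fin.last (n + 1)), ?_⟩) ?_
    · refine (continuous_apply _).comp (continuous_evI ?_ ?_)
      · exact continuous_fst.comp (continuous_snd.comp (continuous_subtype_val.comp
          (continuous_snd.comp continuous_subtype_val)))
      · exact continuous_const.sub (continuous_subtype_val.comp
          (continuous_fst.comp continuous_subtype_val))
    · intro x hx
      rw [revGhFun, dif_pos (show ((muW ιX n x.2):ℝ) ≤ 1/3 from hx)]
      rfl
  · refine continuousOn_of_restrict (F := ⟨fun r =>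
      gammaC ιX n ψ Gh ⟨r.1.2, ne0_of_ge (by norm_num) r.2.1⟩
        (clampI ((1 - (r.1.1:ℝ))*(2 - 3*((muW ιX n r.1.2):ℝ)) + (r.1.1:ℝ)*(1/2))), ?_⟩) ?_
    · refine ContinuousEval.continuous_eval.comp (Continuous.prodMk ?_ (continuous_clampI.comp ?_))
      · exact (map_continuous (gammaC ιX n ψ Gh)).comp (Continuous.subtype_mk
          (continuous_snd.comp continuous_subtype_val) _)
      · have c1 : Continuous fun r : {q : I × HPB (diagPi X (n + 2)) (whitehead ιX (n + 1)).t //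
            1/3 ≤ ((muW ιX n q.2):ℝ) ∧ ((muW ιX n q.2):ℝ) ≤ 2/3} => (r.1.1:ℝ) :=
          continuous_subtype_val.comp (continuous_fst.comp continuous_subtype_val)
        have c2 : Continuous fun r : {q : I × HPB (diagPi X (n + 2)) (whitehead ιX (n + 1)).t //
            1/3 ≤ ((muW ιX n q.2):ℝ) ∧ ((muW ιX n q.2):ℝ) ≤ 2/3} => ((muW ιX n r.1.2):ℝ) :=
          continuous_subtype_val.comp ((map_continuous (muW ιX n)).comp
            (continuous_snd.comp continuous_subtype_val))
        exact ((continuous_const.sub c1).mul (continuous_const.sub (continuous_const.mul c2))).add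
          (c1.mul continuous_const)
    · intro x hx
      have hx1 : (1/3:ℝ) ≤ ((muW ιX n x.2):ℝ) := hx.1
      have hx2 : ((muW ιX n x.2):ℝ) ≤ 2/3 := hx.2
      have ht0 : (0:ℝ) ≤ (x.1:ℝ) := x.1.2.1
      have ht1 : (x.1:ℝ) ≤ 1 := x.1.2.2
      by_cases h1 : ((muW ιX n x.2):ℝ) ≤ 1/3
      · have heq : ((muW ιX n x.2):ℝ) = 1/3 := le_antisymm h1 hx1
        rw [revGhFun, dif_pos h1]
        show _ = gammaC ιX n ψ Gh ⟨x.2, _⟩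
          (clampI ((1 - (x.1:ℝ))*(2 - 3*((muW ιX n x.2):ℝ)) + (x.1:ℝ)*(1/2)))
        rw [show ((1 - (x.1:ℝ))*(2 - 3*((muW ιX n x.2):ℝ)) + (x.1:ℝ)*(1/2)) =
          1 - (x.1:ℝ)/2 by rw [heq]; ring]
        rw [gammaC_ge_half ιX n ψ Gh _ (by linarith) (by linarith)]
        rw [show (2*(1 - (x.1:ℝ)/2) - 1) = 1 - (x.1:ℝ) by ring]
      · rw [revGhFun, dif_neg h1, dif_pos hx2]
        rfl
  · refine continuousOn_of_restrict (F := ⟨fun r =>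
      Gh (r.1.1, PhiR ιX n ⟨r.1.2, ne0_of_ge (by norm_num) r.2⟩), ?_⟩) ?_
    · refine Gh.continuous.comp (Continuous.prodMk
        (continuous_fst.comp continuous_subtype_val) ?_)
      exact (map_continuous (PhiR ιX n)).comp (Continuous.subtype_mk
        (continuous_snd.comp continuous_subtype_val) _)
    · intro x hx
      have hx3 : (2/3:ℝ) ≤ ((muW ιX n x.2):ℝ) := hx
      have ht0 : (0:ℝ) ≤ (x.1:ℝ) := x.1.2.1
      have ht1 : (x.1:ℝ) ≤ 1 := x.1.2.2
      by_cases h1 : ((muW ιX n x.2):ℝ) ≤ 1/3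
      · exfalso; linarith
      · by_cases h2 : ((muW ιX n x.2):ℝ) ≤ 2/3
        · have heq : ((muW ιX n x.2):ℝ) = 2/3 := le_antisymm h2 hx3
          rw [revGhFun, dif_neg h1, dif_pos h2]
          rw [show ((1 - (x.1:ℝ))*(2 - 3*((muW ιX n x.2):ℝ)) + (x.1:ℝ)*(1/2)) =
            (x.1:ℝ)/2 by rw [heq]; ring]
          rw [gammaC_le_half ιX n ψ Gh _ (by linarith) (by linarith)]
          rw [show (2*((x.1:ℝ)/2)) = (x.1:ℝ) by ring, clampI_coe]
          rfl
        · rw [revGhFun, dif_neg h1, dif_neg h2]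
          rfl

/-- The section-compatibility homotopy at the next stage. -/
def revGhHomotopy : ContinuousMap.Homotopy
    ((ganea ιX (n + 1)).g.comp (revPsi ιX n ψ Gh))
    (HPB.fst (diagPi X (n + 2)) (whitehead ιX (n + 1)).t) where
  toFun := revGhFun ιX n ψ Gh
  continuous_toFun := revGhFun_continuous ιX n ψ Gh
  map_zero_left := by
    intro p
    show revGhFun ιX n ψ Gh (0, p) = _
    simp only [ContinuousMap.comp_apply]
    rw [show revPsi ιX n ψ Gh p = revPsiFun ιX n ψ Gh p from rfl]
    rw [revGhFun, revPsiFun]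
    have hmu0 : (0:ℝ) ≤ ((muW ιX n p):ℝ) := (muW ιX n p).2.1
    have hmu1 : ((muW ιX n p):ℝ) ≤ 1 := (muW ιX n p).2.2
    by_cases h1 : ((muW ιX n p):ℝ) ≤ 1/3
    · erw [dif_pos h1, dif_pos h1, gsucc_inl]
      rw [show (1 - (((0:I)):ℝ)) = 1 by rw [coeI_zero]; norm_num, clampI_one]
      rw [show p.1.2.1 1 = (whitehead ιX (n + 1)).t p.1.2.2 from p.2.2]
      exact tsucc_last ιX n _ _
    · erw [dif_neg h1, dif_neg h1]
      have hgt : (1/3:ℝ) < ((muW ιX n p):ℝ) := lt_of_not_ge h1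
      by_cases h2 : ((muW ιX n p):ℝ) ≤ 2/3
      · erw [dif_pos h2, dif_pos h2, gsucc_cyl]
        rw [show ((1 - (((0:I)):ℝ))*(2 - 3*((muW ιX n p):ℝ)) + (((0:I)):ℝ)*(1/2)) =
          2 - 3*((muW ιX n p):ℝ) by rw [coeI_zero]; ring]
        rw [show clampI (2 - 3*((muW ιX n p):ℝ)) =
          σ (clampI (3*((muW ιX n p):ℝ) - 1)) from Subtype.ext (by
            rw [unitInterval.coe_symm_eq]
            rw [clampI_eq_of_mem (by linarith) (by linarith)]
            rw [clampI_eq_of_mem (by linarith) (by linarith)]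
            ring)]
        rfl
      · erw [dif_neg h2, dif_neg h2, gsucc_inr]
        rw [show Gh (0, PhiR ιX n ⟨p, ne0_of_not_le13 h1⟩) =
          ((ganea ιX n).g.comp ψ) (PhiR ιX n ⟨p, ne0_of_not_le13 h1⟩) from Gh.apply_zero _]
        rfl
  map_one_left := by
    intro p
    show revGhFun ιX n ψ Gh (1, p) = _
    rw [revGhFun]
    have hmu0 : (0:ℝ) ≤ ((muW ιX n p):ℝ) := (muW ιX n p).2.1
    by_cases h1 : ((muW ιX n p):ℝ) ≤ 1/3
    · rw [dif_pos h1]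
      rw [show (1 - (((1:I)):ℝ)) = 0 by rw [coeI_one]; norm_num, clampI_zero]
      rw [show p.1.2.1 0 = diagPi X (n + 2) p.1.1 from p.2.1]
      rfl
    · rw [dif_neg h1]
      by_cases h2 : ((muW ιX n p):ℝ) ≤ 2/3
      · rw [dif_pos h2]
        rw [show ((1 - (((1:I)):ℝ))*(2 - 3*((muW ιX n p):ℝ)) + (((1:I)):ℝ)*(1/2)) =
          (1/2:ℝ) by rw [coeI_one]; ring]
        rw [gammaC_le_half ιX n ψ Gh _ (by norm_num) (by norm_num)]
        rw [show (2*(1/2:ℝ)) = 1 by norm_num, clampI_one]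
        rw [show Gh (1, PhiR ιX n ⟨p, ne0_of_not_le13 h1⟩) =
          (HPB.fst (diagPi X (n + 1)) (whitehead ιX n).t)
            (PhiR ιX n ⟨p, ne0_of_not_le13 h1⟩) from Gh.apply_one _]
        rfl
      · rw [dif_neg h2]
        rw [show Gh (1, PhiR ιX n ⟨p, ne0_of_not_le13 h1⟩) =
          (HPB.fst (diagPi X (n + 1)) (whitehead ιX n).t)
            (PhiR ιX n ⟨p, ne0_of_not_le13 h1⟩) from Gh.apply_one _]
        rfl

end Reverse4

section Reverse5

variable {A X : Type u} [TopologicalSpace A] [TopologicalSpace X] (ιX : C(A, X))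

/-- Reverse comparison: from the fat-wedge pullback to the Ganea space. -/
theorem reverseAux :
    ∀ m : ℕ, ∃ (ψ : C(HPB (diagPi X (m + 1)) (whitehead ιX m).t, (ganea ιX m).G))
      (_ : ContinuousMap.Homotopy ((ganea ιX m).g.comp ψ)
        (HPB.fst (diagPi X (m + 1)) (whitehead ιX m).t)),
      ∀ (p : HPB (diagPi X (m + 1)) (whitehead ιX m).t) (a : A),
        p.1.2.2 = (whitehead ιX m).υ (deltaW ιX m a) → ψ p = (ganea ιX m).α a := by
  intro m
  induction m with
  | zero =>
    refine ⟨HPB.snd (diagPi X 1) (whitehead ιX 0).t, ⟨⟨fun q => (q.2.1.2.1 (σ q.1)) 0, ?_⟩,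
      ?_, ?_⟩, ?_⟩
    · refine (continuous_apply _).comp (ContinuousEval.continuous_eval.comp
        (Continuous.prodMk ?_ (continuous_symm.comp continuous_fst)))
      exact continuous_fst.comp (continuous_snd.comp
        (continuous_subtype_val.comp continuous_snd))
    · intro p
      show (p.1.2.1 (σ 0)) 0 = _
      rw [unitInterval.symm_zero]
      rw [show p.1.2.1 1 = (whitehead ιX 0).t p.1.2.2 from p.2.2]
      rfl
    · intro p
      show (p.1.2.1 (σ 1)) 0 = _
      rw [unitInterval.symm_one]
      rw [show p.1.2.1 0 = diagPi X 1 p.1.1 from p.2.1]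
      rfl
    · intro p a hp
      exact hp
  | succ k ih =>
    obtain ⟨ψ, Gh, _⟩ := ih
    exact ⟨revPsi ιX k ψ Gh, revGhHomotopy ιX k ψ Gh,
      fun p a hp => revPsi_upsilon ιX k ψ Gh p a hp⟩

end Reverse5


section Mono

variable {A X : Type u} [TopologicalSpace A] [TopologicalSpace X] (ιX : C(A, X))

theorem t_upsilon_delta (m : ℕ) (a : A) :
    (whitehead ιX m).t ((whitehead ιX m).υ (deltaW ιX m a)) = diagPi X (m + 1) (ιX a) := by
  cases m with
  | zero => rfl
  | succ k =>
    rw [show (whitehead ιX (k + 1)).υ (deltaW ιX (k + 1) a) =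
      HPO.inl (utopW ιX k) (uleftW ιX k) ((fun _ => ιX a : Fin (k + 1) → X), a) from rfl,
      tsucc_inl]
    exact diagPi_snoc (ιX a) k

theorem Wstep (m : ℕ) (ρ : C(X, (whitehead ιX m).T))
    (K : ContinuousMap.Homotopy ((whitehead ιX m).t.comp ρ) (diagPi X (m + 1))) :
    ∃ (ρ' : C(X, (whitehead ιX (m + 1)).T))
      (_ : ContinuousMap.Homotopy ((whitehead ιX (m + 1)).t.comp ρ') (diagPi X (m + 2))),
      ((ρ.comp ιX).Homotopic ((whitehead ιX m).υ.comp (deltaW ιX m)) →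
        (ρ'.comp ιX).Homotopic ((whitehead ιX (m + 1)).υ.comp (deltaW ιX (m + 1)))) := by
  refine ⟨(HPO.inr (utopW ιX m) (uleftW ιX m)).comp
    ⟨fun x => (ρ x, x), (map_continuous ρ).prodMk continuous_id⟩, ⟨⟨fun q =>
      Fin.snoc (K q) q.2, ?_⟩, ?_, ?_⟩, ?_⟩
  · exact continuous_snocFun K.continuous continuous_snd
  · intro x
    show Fin.snoc (K (0, x)) x = ((whitehead ιX (m + 1)).t.comp
      ((HPO.inr (utopW ιX m) (uleftW ιX m)).comp
        ⟨fun y => (ρ y, y), (map_continuous ρ).prodMk continuous_id⟩)) x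
    rw [show K (0, x) = ((whitehead ιX m).t.comp ρ) x from K.apply_zero x]
    simp only [ContinuousMap.comp_apply]
    exact (tsucc_inr ιX m (ρ x, x)).symm
  · intro x
    show Fin.snoc (K (1, x)) x = diagPi X (m + 2) x
    rw [show K (1, x) = diagPi X (m + 1) x from K.apply_one x]
    exact diagPi_snoc x m
  · rintro ⟨M0⟩
    refine ⟨⟨⟨fun q => if ((q.1:ℝ)) ≤ 1/2 then
        HPO.inr (utopW ιX m) (uleftW ιX m) (M0 (clampI (2*(q.1:ℝ)), q.2), ιX q.2)
      else HPO.cyl (utopW ιX m) (uleftW ιX m)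
        (((whitehead ιX m).υ (deltaW ιX m q.2), q.2), clampI (2 - 2*(q.1:ℝ))), ?_⟩, ?_, ?_⟩⟩
    · have cu : Continuous fun q : I × A => (q.1:ℝ) := continuous_subtype_val.comp continuous_fst
      apply Continuous.if_le
      · exact (map_continuous (HPO.inr (utopW ιX m) (uleftW ιX m))).comp
          ((M0.continuous.comp ((continuous_clampI.comp (continuous_const.mul cu)).prodMk
            continuous_snd)).prodMk ((map_continuous ιX).comp continuous_snd))
      · exact (map_continuous (HPO.cyl (utopW ιX m) (uleftW ιX m))).comp
          ((((map_continuous (whitehead ιX m).υ).comp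
            ((map_continuous (deltaW ιX m)).comp continuous_snd)).prodMk
              continuous_snd).prodMk
            (continuous_clampI.comp (continuous_const.sub (continuous_const.mul cu))))
      · exact cu
      · exact continuous_const
      · intro q hq
        rw [hq]
        rw [show clampI (2*(1/2:ℝ)) = 1 by
          rw [show (2*(1/2:ℝ)) = 1 by norm_num]; exact clampI_one]
        rw [show clampI (2 - 2*(1/2:ℝ)) = 1 by
          rw [show (2 - 2*(1/2:ℝ)) = 1 by norm_num]; exact clampI_one]
        rw [show M0 (1, q.2) = ((whitehead ιX m).υ.comp (deltaW ιX m)) q.2 from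
          M0.apply_one q.2]
        rw [HPO.cyl_eq_inr]
        rfl
    · intro a
      simp only [ContinuousMap.coe_mk]
      erw [if_pos (by rw [coeI_zero]; norm_num : (((0:I)):ℝ) ≤ 1/2)]
      rw [show clampI (2*(((0:I)):ℝ)) = 0 by
        rw [coeI_zero, show (2*(0:ℝ)) = 0 by norm_num]; exact clampI_zero]
      rw [show M0 (0, a) = (ρ.comp ιX) a from M0.apply_zero a]
      rfl
    · intro a
      simp only [ContinuousMap.coe_mk]
      erw [if_neg (by rw [coeI_one]; norm_num : ¬ (((1:I)):ℝ) ≤ 1/2)]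
      rw [show clampI (2 - 2*(((1:I)):ℝ)) = 0 by
        rw [coeI_one, show (2 - 2*(1:ℝ)) = 0 by norm_num]; exact clampI_zero]
      rw [← HPO.inl_eq_cyl]
      rw [show (utopW ιX m) ((whitehead ιX m).υ (deltaW ιX m a), a) =
        ((whitehead ιX m).t ((whitehead ιX m).υ (deltaW ιX m a)), a) from rfl]
      rw [t_upsilon_delta]
      rfl

end Mono


section Final

variable {A X : Type u} [TopologicalSpace A] [TopologicalSpace X] (ιX : C(A, X)) (m : ℕ)
  (ρ : C(X, (whitehead ιX m).T))
  (K : ContinuousMap.Homotopy ((whitehead ιX m).t.comp ρ) (diagPi X (m + 1)))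

/-- The comparison lift into the homotopy pullback of the fat wedge. -/
def lamRho : C(X, HPB (diagPi X (m + 1)) (whitehead ιX m).t) :=
  HPB.lift (diagPi X (m + 1)) (whitehead ιX m).t (ContinuousMap.id X) ρ
    (K.symm.cast (ContinuousMap.comp_id _).symm rfl)

theorem fst_lamRho : (HPB.fst (diagPi X (m + 1)) (whitehead ιX m).t).comp (lamRho ιX m ρ K) =
    ContinuousMap.id X := ContinuousMap.ext fun _ => rfl

variable (M0 : ContinuousMap.Homotopy (ρ.comp ιX) ((whitehead ιX m).υ.comp (deltaW ιX m)))

/-- Two-parameter family of paths used to slide the lift along `M0`. -/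
def innerW : C((I × A) × I, Fin (m + 1) → X) where
  toFun := fun q =>
    if (1 + (q.1.1:ℝ))*(q.2:ℝ) ≤ 1 then
      K (σ (clampI ((1 + (q.1.1:ℝ))*(q.2:ℝ))), ιX q.1.2)
    else (whitehead ιX m).t (M0 (clampI ((1 + (q.1.1:ℝ))*(q.2:ℝ) - 1), q.1.2))
  continuous_toFun := by
    have cu : Continuous fun q : (I × A) × I => (q.1.1:ℝ) :=
      continuous_subtype_val.comp (continuous_fst.comp continuous_fst)
    have cv : Continuous fun q : (I × A) × I => (q.2:ℝ) :=
      continuous_subtype_val.comp continuous_snd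
    have ca : Continuous fun q : (I × A) × I => q.1.2 := continuous_snd.comp continuous_fst
    have cprod : Continuous fun q : (I × A) × I => (1 + (q.1.1:ℝ))*(q.2:ℝ) :=
      (continuous_const.add cu).mul cv
    apply Continuous.if_le
    · exact K.continuous.comp ((continuous_symm.comp (continuous_clampI.comp cprod)).prodMk
        ((map_continuous ιX).comp ca))
    · exact (map_continuous (whitehead ιX m).t).comp (M0.continuous.comp
        ((continuous_clampI.comp (cprod.sub continuous_const)).prodMk ca))
    · exact cprod
    · exact continuous_const
    · intro q hq
      rw [hq]
      rw [show clampI (1:ℝ) = 1 from clampI_one, unitInterval.symm_one]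
      rw [show clampI ((1:ℝ) - 1) = 0 by rw [show ((1:ℝ) - 1) = 0 by norm_num]; exact clampI_zero]
      rw [show K (0, ιX q.1.2) = ((whitehead ιX m).t.comp ρ) (ιX q.1.2) from K.apply_zero _]
      rw [show M0 (0, q.1.2) = (ρ.comp ιX) q.1.2 from M0.apply_zero _]
      rfl

/-- The deformation of the lift over `A`. -/
def LamFull : C(I × A, HPB (diagPi X (m + 1)) (whitehead ιX m).t) where
  toFun := fun q => ⟨(ιX q.2, ((innerW ιX m ρ K M0).curry (q.1, q.2), M0 q)), by
    constructor
    · show innerW ιX m ρ K M0 ((q.1, q.2), 0) = _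
      rw [show innerW ιX m ρ K M0 ((q.1, q.2), 0) =
        (if (1 + (q.1:ℝ))*(((0:I)):ℝ) ≤ 1 then
          K (σ (clampI ((1 + (q.1:ℝ))*(((0:I)):ℝ))), ιX q.2)
        else (whitehead ιX m).t (M0 (clampI ((1 + (q.1:ℝ))*(((0:I)):ℝ) - 1), q.2))) from rfl]
      rw [if_pos (by rw [coeI_zero]; norm_num : (1 + (q.1:ℝ))*(((0:I)):ℝ) ≤ 1)]
      rw [show ((1 + (q.1:ℝ))*(((0:I)):ℝ)) = 0 by rw [coeI_zero]; ring]
      rw [clampI_zero, unitInterval.symm_zero]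
      rw [show K (1, ιX q.2) = diagPi X (m + 1) (ιX q.2) from K.apply_one _]
    · show innerW ιX m ρ K M0 ((q.1, q.2), 1) = _
      rw [show innerW ιX m ρ K M0 ((q.1, q.2), 1) =
        (if (1 + (q.1:ℝ))*(((1:I)):ℝ) ≤ 1 then
          K (σ (clampI ((1 + (q.1:ℝ))*(((1:I)):ℝ))), ιX q.2)
        else (whitehead ιX m).t (M0 (clampI ((1 + (q.1:ℝ))*(((1:I)):ℝ) - 1), q.2))) from rfl]
      by_cases hc : (1 + (q.1:ℝ))*(((1:I)):ℝ) ≤ 1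
      · have hu : (q.1:ℝ) = 0 := by
          rw [coeI_one] at hc
          have := q.1.2.1
          linarith
        have hu' : q.1 = 0 := Subtype.ext (by rw [hu, coeI_zero])
        rw [if_pos hc]
        rw [show ((1 + (q.1:ℝ))*(((1:I)):ℝ)) = 1 by rw [hu, coeI_one]; ring]
        rw [clampI_one, unitInterval.symm_one]
        rw [show K (0, ιX q.2) = ((whitehead ιX m).t.comp ρ) (ιX q.2) from K.apply_zero _]
        have hM : M0 q = (ρ.comp ιX) q.2 := by
          rw [show q = ((0:I), q.2) from Prod.ext hu' rfl]
          exact M0.apply_zero q.2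
        show ((whitehead ιX m).t.comp ρ) (ιX q.2) = (whitehead ιX m).t (M0 q)
        rw [hM]
        rfl
      · rw [if_neg hc]
        rw [show ((1 + (q.1:ℝ))*(((1:I)):ℝ) - 1) = (q.1:ℝ) by rw [coeI_one]; ring]
        rw [clampI_coe]⟩
  continuous_toFun := by
    apply Continuous.subtype_mk
    refine ((map_continuous ιX).comp continuous_snd).prodMk (Continuous.prodMk ?_ ?_)
    · exact (map_continuous (innerW ιX m ρ K M0).curry).comp
        (continuous_fst.prodMk continuous_snd)
    · exact M0.continuous

theorem LamFull_zero (a : A) : LamFull ιX m ρ K M0 (0, a) = lamRho ιX m ρ K (ιX a) := by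
  apply Subtype.ext
  refine Prod.ext rfl (Prod.ext ?_ ?_)
  · apply ContinuousMap.ext
    intro v
    show innerW ιX m ρ K M0 (((0:I), a), v) = _
    rw [show innerW ιX m ρ K M0 (((0:I), a), v) =
      (if (1 + (((0:I)):ℝ))*((v:I):ℝ) ≤ 1 then
        K (σ (clampI ((1 + (((0:I)):ℝ))*((v:I):ℝ))), ιX a)
      else (whitehead ιX m).t (M0 (clampI ((1 + (((0:I)):ℝ))*((v:I):ℝ) - 1), a))) from rfl]
    rw [if_pos (by rw [coeI_zero]; have := v.2.2; linarith : (1 + (((0:I)):ℝ))*((v:I):ℝ) ≤ 1)]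
    rw [show ((1 + (((0:I)):ℝ))*((v:I):ℝ)) = (v:ℝ) by rw [coeI_zero]; ring]
    rw [clampI_coe]
    rfl
  · show M0 (0, a) = _
    rw [show M0 (0, a) = (ρ.comp ιX) a from M0.apply_zero _]
    rfl

theorem LamFull_one_snd (a : A) :
    (LamFull ιX m ρ K M0 (1, a)).1.2.2 = (whitehead ιX m).υ (deltaW ιX m a) := by
  show M0 (1, a) = _
  rw [show M0 (1, a) = ((whitehead ιX m).υ.comp (deltaW ιX m)) a from M0.apply_one _]
  rfl

end Final

section Final2

variable {A X : Type u} [TopologicalSpace A] [TopologicalSpace X] (ιX : C(A, X))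

theorem Wsec_mono {m n : ℕ} (h : m ≤ n)
    (hw : ∃ ρ : C(X, (whitehead ιX m).T),
      ((whitehead ιX m).t.comp ρ).Homotopic (diagPi X (m + 1))) :
    ∃ ρ : C(X, (whitehead ιX n).T),
      ((whitehead ιX n).t.comp ρ).Homotopic (diagPi X (n + 1)) := by
  induction n, h using Nat.le_induction with
  | base => exact hw
  | succ k hk ih =>
    obtain ⟨ρ, ⟨K⟩⟩ := ih
    obtain ⟨ρ', K', _⟩ := Wstep ιX k ρ K
    exact ⟨ρ', ⟨K'⟩⟩

theorem Wrel_mono {m n : ℕ} (h : m ≤ n)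
    (hw : ∃ ρ : C(X, (whitehead ιX m).T),
      ((whitehead ιX m).t.comp ρ).Homotopic (diagPi X (m + 1)) ∧
      (ρ.comp ιX).Homotopic ((whitehead ιX m).υ.comp (deltaW ιX m))) :
    ∃ ρ : C(X, (whitehead ιX n).T),
      ((whitehead ιX n).t.comp ρ).Homotopic (diagPi X (n + 1)) ∧
      (ρ.comp ιX).Homotopic ((whitehead ιX n).υ.comp (deltaW ιX n)) := by
  induction n, h using Nat.le_induction with
  | base => exact hw
  | succ k hk ih =>
    obtain ⟨ρ, ⟨K⟩, hM⟩ := ih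
    obtain ⟨ρ', K', hrel⟩ := Wstep ιX k ρ K
    exact ⟨ρ', ⟨K'⟩, hrel hM⟩

theorem secatLe_iff_W (m : ℕ) :
    secatLe ιX m ↔ ∃ ρ : C(X, (whitehead ιX m).T),
      ((whitehead ιX m).t.comp ρ).Homotopic (diagPi X (m + 1)) := by
  constructor
  · rintro ⟨s, hs⟩
    obtain ⟨φ', Hh, -⟩ := forwardAux ιX m
    refine ⟨φ'.comp s, ?_⟩
    have h2 : (((whitehead ιX m).t.comp φ').comp s).Homotopic
        (((diagPi X (m + 1)).comp (ganea ιX m).g).comp s) :=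
      ContinuousMap.Homotopic.comp ⟨Hh⟩ (ContinuousMap.Homotopic.refl s)
    have h4 : ((diagPi X (m + 1)).comp ((ganea ιX m).g.comp s)).Homotopic
        ((diagPi X (m + 1)).comp (ContinuousMap.id X)) :=
      ContinuousMap.Homotopic.comp (ContinuousMap.Homotopic.refl (diagPi X (m + 1))) hs
    have h5 : (diagPi X (m + 1)).comp (ContinuousMap.id X) = diagPi X (m + 1) :=
      ContinuousMap.comp_id _
    exact h2.trans (h5 ▸ h4)
  · rintro ⟨ρ, ⟨K⟩⟩
    obtain ⟨ψ, Gh, -⟩ := reverseAux ιX m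
    refine ⟨ψ.comp (lamRho ιX m ρ K), ?_⟩
    have h2 : (((ganea ιX m).g.comp ψ).comp (lamRho ιX m ρ K)).Homotopic
        ((HPB.fst (diagPi X (m + 1)) (whitehead ιX m).t).comp (lamRho ιX m ρ K)) :=
      ContinuousMap.Homotopic.comp ⟨Gh⟩ (ContinuousMap.Homotopic.refl (lamRho ιX m ρ K))
    exact (fst_lamRho ιX m ρ K) ▸ h2

theorem relcatLe_iff_W (m : ℕ) :
    relcatLe ιX m ↔ ∃ ρ : C(X, (whitehead ιX m).T),
      ((whitehead ιX m).t.comp ρ).Homotopic (diagPi X (m + 1)) ∧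
      (ρ.comp ιX).Homotopic ((whitehead ιX m).υ.comp (deltaW ιX m)) := by
  constructor
  · rintro ⟨s, hs, hsα⟩
    obtain ⟨φ', Hh, hφα⟩ := forwardAux ιX m
    refine ⟨φ'.comp s, ?_, ?_⟩
    · have h2 : (((whitehead ιX m).t.comp φ').comp s).Homotopic
          (((diagPi X (m + 1)).comp (ganea ιX m).g).comp s) :=
        ContinuousMap.Homotopic.comp ⟨Hh⟩ (ContinuousMap.Homotopic.refl s)
      have h4 : ((diagPi X (m + 1)).comp ((ganea ιX m).g.comp s)).Homotopic
          ((diagPi X (m + 1)).comp (ContinuousMap.id X)) :=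
        ContinuousMap.Homotopic.comp (ContinuousMap.Homotopic.refl (diagPi X (m + 1))) hs
      have h5 : (diagPi X (m + 1)).comp (ContinuousMap.id X) = diagPi X (m + 1) :=
        ContinuousMap.comp_id _
      exact h2.trans (h5 ▸ h4)
    · have h2 : (φ'.comp (s.comp ιX)).Homotopic (φ'.comp (ganea ιX m).α) :=
        ContinuousMap.Homotopic.comp (ContinuousMap.Homotopic.refl φ') hsα
      exact hφα ▸ h2
  · rintro ⟨ρ, ⟨K⟩, ⟨M0⟩⟩
    obtain ⟨ψ, Gh, hψ⟩ := reverseAux ιX m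
    refine ⟨ψ.comp (lamRho ιX m ρ K), ?_, ?_⟩
    · have h2 : (((ganea ιX m).g.comp ψ).comp (lamRho ιX m ρ K)).Homotopic
          ((HPB.fst (diagPi X (m + 1)) (whitehead ιX m).t).comp (lamRho ιX m ρ K)) :=
        ContinuousMap.Homotopic.comp ⟨Gh⟩ (ContinuousMap.Homotopic.refl (lamRho ιX m ρ K))
      exact (fst_lamRho ιX m ρ K) ▸ h2
    · refine ⟨⟨⟨fun q => ψ (LamFull ιX m ρ K M0 q),
        ψ.continuous.comp (map_continuous (LamFull ιX m ρ K M0))⟩, ?_, ?_⟩⟩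
      · intro a
        show ψ (LamFull ιX m ρ K M0 (0, a)) = _
        rw [LamFull_zero]
        rfl
      · intro a
        show ψ (LamFull ιX m ρ K M0 (1, a)) = _
        exact hψ _ a (LamFull_one_snd ιX m ρ K M0 a)

end Final2

end AuxInfra
/-- Whitehead-style characterization of sectional and relative category. -/
theorem secat_relcat_iff_whitehead {A X : Type u} [TopologicalSpace A] [TopologicalSpace X]
    (ιX : C(A, X)) (n : ℕ) :
    (secat ιX ≤ (n : ℕ∞) ↔ ∃ ρ : C(X, (whitehead ιX n).T),
      ((whitehead ιX n).t.comp ρ).Homotopic (diagPi X (n + 1))) ∧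
    (relcat ιX ≤ (n : ℕ∞) ↔ ∃ ρ : C(X, (whitehead ιX n).T),
      ((whitehead ιX n).t.comp ρ).Homotopic (diagPi X (n + 1)) ∧
      (ρ.comp ιX).Homotopic ((whitehead ιX n).υ.comp (deltaW ιX n))) := by
  constructor
  · rw [secat, theNat_le_iff]
    constructor
    · rintro ⟨m, hm, hsec⟩
      exact Wsec_mono ιX hm ((secatLe_iff_W ιX m).mp hsec)
    · intro hW
      exact ⟨n, le_rfl, (secatLe_iff_W ιX n).mpr hW⟩
  · rw [relcat, theNat_le_iff]
    constructor
    · rintro ⟨m, hm, hrel⟩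
      exact Wrel_mono ιX hm ((relcatLe_iff_W ιX m).mp hrel)
    · intro hW
      exact ⟨n, le_rfl, (relcatLe_iff_W ιX n).mpr hW⟩
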